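/- arXiv:1709.02118 — 4 statements merged into one kernel-verified Lean document; each statement's English description precedes it below -/
import Mathlib

section
/- Let U be an open ball in ℝ³. Then for any two points x, y in the complement of the closure of U, there exists a rectifiable path γ from x to y lying entirely in ℝ³ \ closure(U) whose length is at most √2 · √((π/4)² + 1) · |x − y|. -/
open Real Set Metric
open scoped RealInnerProductSpace
set_option maxHeartbeats 3000000

lemma ineq_norm (θ τ : ℝ) (h0 : 0 ≤ θ) (hπ : θ ≤ π) (hτ : 0 ≤ τ) :
    (θ + τ)^2 ≤ (π^2/8 + 2) * (τ^2 + 4*(1+τ)*Real.sin (θ/2)^2) := by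
  have hpi3 : (3:ℝ) < π := Real.pi_gt_three
  have hC : (3:ℝ) ≤ π^2/8 + 2 := by nlinarith
  have hs0 : 0 ≤ Real.sin (θ/2) :=
    Real.sin_nonneg_of_nonneg_of_le_pi (by linarith) (by linarith)
  have hsq : (0:ℝ) ≤ τ^2 + 4*(1+τ)*Real.sin (θ/2)^2 := by positivity
  rcases eq_or_lt_of_le h0 with h|hpos
  · rw [← h]
    norm_num
    nlinarith [mul_le_mul_of_nonneg_right hC (sq_nonneg τ)]
  rcases le_total θ 1 with h1|h1
  · -- small θ : sin_gt_sub_cube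
    have hθ2 : θ^2 ≤ 1 := by nlinarith
    have hq : θ/2 - (θ/2)^3/4 < Real.sin (θ/2) :=
      by have := Real.sin_gt_sub_cube (x := θ/2) (by linarith)
         nlinarith [pow_pos (show (0:ℝ) < θ/2 by linarith) 3]
    have hqnn : (0:ℝ) ≤ θ/2 - (θ/2)^3/4 := by
      nlinarith [mul_le_mul_of_nonneg_left hθ2 hpos.le]
    have hs2 : (θ/2 - (θ/2)^3/4)^2 ≤ Real.sin (θ/2)^2 := by nlinarith
    have hq2 : (225/256)*θ^2 ≤ 4*(θ/2 - (θ/2)^3/4)^2 := by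
      nlinarith [mul_nonneg (mul_nonneg (sq_nonneg θ) (sub_nonneg.2 hθ2))
        (show (0:ℝ) ≤ 31 - θ^2 by nlinarith)]
    have h1τ : (0:ℝ) ≤ 1 + τ := by linarith
    have hA : (1+τ)*((225/256)*θ^2) ≤ (1+τ)*(4*Real.sin (θ/2)^2) :=
      mul_le_mul_of_nonneg_left (by nlinarith) h1τ
    have key : (θ+τ)^2 ≤ 3*(τ^2 + 4*(1+τ)*Real.sin (θ/2)^2) := by
      nlinarith [hA, sq_nonneg (2*τ - θ), mul_nonneg hτ (sq_nonneg θ)]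
    nlinarith [mul_le_mul_of_nonneg_right hC hsq]
  · -- θ ≥ 1 : mul_le_sin
    have hms : 2/π * (θ/2) ≤ Real.sin (θ/2) := Real.mul_le_sin (by linarith) (by linarith)
    have hθπs : θ ≤ π * Real.sin (θ/2) := by
      have hπ0 : (0:ℝ) < π := by linarith
      have h2 := mul_le_mul_of_nonneg_left hms hπ0.le
      have h3 : π * (2/π * (θ/2)) = θ := by field_simp
      rw [h3] at h2; exact h2
    have hπ315 : π < 63/20 := by have := Real.pi_lt_d2; norm_num at this; linarith
    have hs315 : (20/63)*θ ≤ Real.sin (θ/2) := by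
      nlinarith [mul_le_mul_of_nonneg_right hπ315.le hs0]
    have hs2 : ((20/63)*θ)^2 ≤ Real.sin (θ/2)^2 := by
      nlinarith [mul_nonneg (mul_nonneg (by norm_num : (0:ℝ) ≤ 20/63) h0) hs0]
    have h1τ : (0:ℝ) ≤ 1 + τ := by linarith
    have hA : (1+τ)*(4*((20/63)*θ)^2) ≤ (1+τ)*(4*Real.sin (θ/2)^2) :=
      mul_le_mul_of_nonneg_left (by nlinarith) h1τ
    have key : (θ+τ)^2 ≤ (404/125)*(τ^2 + 4*(1+τ)*Real.sin (θ/2)^2) := by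
      nlinarith [hA, sq_nonneg (2*τ - θ), mul_nonneg (mul_nonneg h0 (sub_nonneg.2 h1)) hτ,
        sq_nonneg (θ - 2*τ), sq_nonneg (θ - τ)]
    have hp : (157/50:ℝ) < π := by have := Real.pi_gt_d2; norm_num at this; linarith
    have hC2 : (404/125:ℝ) ≤ π^2/8 + 2 := by nlinarith [sq_nonneg (π - 157/50)]
    nlinarith [mul_le_mul_of_nonneg_right hC2 hsq]

lemma exists_unit_orthogonal (u : EuclideanSpace ℝ (Fin 3)) :
    ∃ v : EuclideanSpace ℝ (Fin 3), ‖v‖ = 1 ∧ ⟪u, v⟫ = 0 := by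
  have hne : (ℝ ∙ u)ᗮ ≠ ⊥ := by
    intro hbot
    have h1 := Submodule.finrank_add_finrank_orthogonal (K := (ℝ ∙ u))
    rw [hbot, finrank_bot, finrank_euclideanSpace_fin] at h1
    have h2 : Module.finrank ℝ (ℝ ∙ u) ≤ 1 := by
      rcases eq_or_ne u 0 with h|h
      · subst h; rw [Submodule.span_zero_singleton]; simp [finrank_bot]
      · rw [finrank_span_singleton h]
    omega
  obtain ⟨z, hz, hz0⟩ := Submodule.exists_mem_ne_zero_of_ne_bot hne
  refine ⟨‖z‖⁻¹ • z, ?_, ?_⟩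
  · rw [norm_smul, norm_inv, norm_norm]
    field_simp [norm_ne_zero_iff.2 hz0]
  · have h3 : ⟪u, z⟫ = 0 := by
      have := (Submodule.mem_orthogonal (ℝ ∙ u) z).1 hz u (Submodule.mem_span_singleton_self u)
      exact this
    rw [real_inner_smul_right, h3, mul_zero]

lemma norm_combo {u v : EuclideanSpace ℝ (Fin 3)} (hu : ‖u‖ = 1) (hv : ‖v‖ = 1)
    (huv : ⟪u, v⟫ = 0) (p q : ℝ) : ‖p • u + q • v‖^2 = p^2 + q^2 := by
  rw [@norm_add_sq_real, norm_smul, norm_smul, real_inner_smul_left, real_inner_smul_right, huv,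
    hu, hv]
  simp [sq_abs]

lemma evar_le_of_lip {f : ℝ → EuclideanSpace ℝ (Fin 3)} {c d M : ℝ} (hcd : c ≤ d) (hM : 0 ≤ M)
    (h : ∀ s ∈ Icc c d, ∀ t ∈ Icc c d, ‖f s - f t‖ ≤ M * |s - t|) :
    eVariationOn f (Icc c d) ≤ ENNReal.ofReal (M * (d - c)) := by
  have hlip : LipschitzOnWith (Real.toNNReal M) f (Icc c d) := by
    apply LipschitzOnWith.of_dist_le_mul
    intro s hs t ht
    rw [dist_eq_norm, Real.dist_eq, Real.coe_toNNReal _ hM]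
    exact h s hs t ht
  have h1 : eVariationOn (f ∘ id) (Icc c d)
      ≤ (Real.toNNReal M : ENNReal) * eVariationOn id (Icc c d) :=
    hlip.comp_eVariationOn_le (Set.mapsTo_id _)
  rw [Function.comp_id] at h1
  have h2 : eVariationOn (id : ℝ → ℝ) (Icc c d) ≤ ENNReal.ofReal (d - c) := by
    have h3 := MonotoneOn.eVariationOn_le (f := (id : ℝ → ℝ)) (s := Icc c d)
      (fun p _ q _ hpq => hpq) (left_mem_Icc.2 hcd) (right_mem_Icc.2 hcd)
    simpa using h3
  calc eVariationOn f (Icc c d) ≤ _ := h1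
    _ ≤ (Real.toNNReal M : ENNReal) * ENNReal.ofReal (d - c) := mul_le_mul_right h2 _
    _ = ENNReal.ofReal (M * (d - c)) := by
        rw [ENNReal.ofReal_mul hM]; rfl

lemma sq_facts {b c p : ℝ} (hb : 0 < b) (hb2 : b^2 = c^2 + p^2) :
    -b ≤ c ∧ c ≤ b := by
  constructor
  · nlinarith [sq_nonneg (c + b), sq_nonneg p]
  · nlinarith [sq_nonneg (c - b), sq_nonneg p]

lemma aux (ξ : EuclideanSpace ℝ (Fin 3)) (r : ℝ) (hr : 0 ≤ r)
    (x y : EuclideanSpace ℝ (Fin 3))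
    (hx : r < ‖x - ξ‖) (hy : r < ‖y - ξ‖) (hab : ‖x - ξ‖ ≤ ‖y - ξ‖) :
    ∃ γ : ℝ → EuclideanSpace ℝ (Fin 3), ContinuousOn γ (Set.Icc 0 1) ∧
      γ 0 = x ∧ γ 1 = y ∧ (∀ t ∈ Set.Icc (0:ℝ) 1, r < ‖γ t - ξ‖) ∧
      eVariationOn γ (Set.Icc 0 1)
        ≤ ENNReal.ofReal (Real.sqrt 2 * Real.sqrt ((π/4)^2 + 1) * ‖x - y‖) := by
  obtain ⟨a, ha_def⟩ : ∃ a, a = ‖x - ξ‖ := ⟨_, rfl⟩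
  obtain ⟨b, hb_def⟩ : ∃ b, b = ‖y - ξ‖ := ⟨_, rfl⟩
  rw [← ha_def] at hx; rw [← hb_def] at hy
  have hab' : a ≤ b := by rw [ha_def, hb_def]; exact hab
  have ha : 0 < a := lt_of_le_of_lt hr hx
  have hb : 0 < b := lt_of_le_of_lt hr hy
  obtain ⟨u, hu_def⟩ : ∃ u : EuclideanSpace ℝ (Fin 3), u = a⁻¹ • (x - ξ) := ⟨_, rfl⟩
  obtain ⟨w, hw_def⟩ : ∃ w : EuclideanSpace ℝ (Fin 3), w = y - ξ := ⟨_, rfl⟩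
  have hwn : ‖w‖ = b := by rw [hw_def, hb_def]
  have hau : a • u = x - ξ := by
    rw [hu_def, smul_smul, mul_inv_cancel₀ ha.ne', one_smul]
  have hu : ‖u‖ = 1 := by
    rw [hu_def, norm_smul, norm_inv, Real.norm_eq_abs, abs_of_pos ha, ← ha_def]
    field_simp
  obtain ⟨c, hc_def⟩ : ∃ c : ℝ, c = ⟪u, w⟫ := ⟨_, rfl⟩
  obtain ⟨v, p, hv, huv, hp, hwc⟩ :
      ∃ (v : EuclideanSpace ℝ (Fin 3)) (p : ℝ), ‖v‖ = 1 ∧ ⟪u, v⟫ = 0 ∧ 0 ≤ p ∧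
        w = c • u + p • v := by
    rcases eq_or_ne (w - c • u) 0 with h|h
    · obtain ⟨v, hv, huv⟩ := exists_unit_orthogonal u
      refine ⟨v, 0, hv, huv, le_refl 0, ?_⟩
      rw [zero_smul, add_zero, ← sub_eq_zero]
      exact h
    · refine ⟨‖w - c • u‖⁻¹ • (w - c • u), ‖w - c • u‖, ?_, ?_, norm_nonneg _, ?_⟩
      · rw [norm_smul, norm_inv, norm_norm]
        field_simp [norm_ne_zero_iff.2 h]
      · rw [real_inner_smul_right, inner_sub_right, real_inner_smul_right,
          real_inner_self_eq_norm_sq, hu]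
        rw [← hc_def]; ring
      · rw [smul_inv_smul₀ (norm_ne_zero_iff.2 h)]; abel
  have hb2 : b^2 = c^2 + p^2 := by
    have h1 := norm_combo hu hv huv c p
    rw [← hwc, hwn] at h1
    exact h1
  obtain ⟨hc1, hc2⟩ := sq_facts hb hb2
  obtain ⟨θ, hθ_def⟩ : ∃ θ : ℝ, θ = Real.arccos (c/b) := ⟨_, rfl⟩
  have hθ0 : 0 ≤ θ := by rw [hθ_def]; exact Real.arccos_nonneg _
  have hθπ : θ ≤ π := by rw [hθ_def]; exact Real.arccos_le_pi _
  have hcos : Real.cos θ = c/b := by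
    rw [hθ_def]
    exact Real.cos_arccos (by rw [neg_le, ← neg_div]; exact (div_le_one hb).2 (by linarith))
      ((div_le_one hb).2 hc2)
  have hsin : Real.sin θ = p/b := by
    rw [hθ_def, Real.sin_arccos]
    have h1 : 1 - (c/b)^2 = (p/b)^2 := by
      field_simp
      linarith [hb2]
    rw [h1, Real.sqrt_sq (by positivity)]
  have hcb : c = b * Real.cos θ := by rw [hcos]; field_simp
  have hpb : p = b * Real.sin θ := by rw [hsin]; field_simp
  obtain ⟨A, hA_def⟩ : ∃ A : ℝ → EuclideanSpace ℝ (Fin 3),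
      A = fun s => ξ + (a*Real.cos (θ*s)) • u + (a*Real.sin (θ*s)) • v := ⟨_, rfl⟩
  obtain ⟨S, hS_def⟩ : ∃ S : ℝ → EuclideanSpace ℝ (Fin 3),
      S = fun s => ξ + ((a + s*(b-a))/b) • w := ⟨_, rfl⟩
  have hA0 : A 0 = x := by
    rw [hA_def]
    simp only [mul_zero, Real.cos_zero, Real.sin_zero, mul_one, zero_smul, add_zero]
    rw [hau]; abel
  have hS1 : S 1 = y := by
    rw [hS_def]
    simp only
    rw [show (a + 1*(b-a))/b = 1 by field_simp; ring, one_smul, hw_def]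
    abel
  have hmatch : A 1 = S 0 := by
    rw [hA_def, hS_def]
    simp only [mul_one, zero_mul, add_zero]
    rw [hcos, hsin, hwc]
    have e1 : a * (c/b) = (a/b) * c := by ring
    have e2 : a * (p/b) = (a/b) * p := by ring
    rw [e1, e2, smul_add, smul_smul, smul_smul]
    abel
  have hAnorm : ∀ s : ℝ, ‖A s - ξ‖ = a := by
    intro s
    rw [hA_def]
    simp only
    have h1 : ξ + (a*Real.cos (θ*s)) • u + (a*Real.sin (θ*s)) • v - ξ
        = (a*Real.cos (θ*s)) • u + (a*Real.sin (θ*s)) • v := by abel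
    rw [h1]
    have h2 := norm_combo hu hv huv (a*Real.cos (θ*s)) (a*Real.sin (θ*s))
    have h3 : (a*Real.cos (θ*s))^2 + (a*Real.sin (θ*s))^2 = a^2 := by
      linear_combination a^2 * Real.sin_sq_add_cos_sq (θ*s)
    calc ‖(a*Real.cos (θ*s)) • u + (a*Real.sin (θ*s)) • v‖
        = Real.sqrt (‖(a*Real.cos (θ*s)) • u + (a*Real.sin (θ*s)) • v‖^2) :=
          (Real.sqrt_sq (norm_nonneg _)).symm
      _ = a := by rw [h2, h3, Real.sqrt_sq ha.le]
  have hSnorm : ∀ s : ℝ, 0 ≤ s → ‖S s - ξ‖ = a + s*(b-a) := by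
    intro s hs0
    rw [hS_def]
    simp only
    have h1 : ξ + ((a + s*(b-a))/b) • w - ξ = ((a + s*(b-a))/b) • w := by abel
    have hnn : 0 ≤ a + s*(b-a) := by
      have := mul_nonneg hs0 (sub_nonneg.2 hab')
      linarith
    rw [h1, norm_smul, Real.norm_eq_abs, hwn, abs_of_nonneg (div_nonneg hnn hb.le)]
    field_simp
  have hAlip : ∀ s t : ℝ, ‖A s - A t‖ ≤ a*θ*|s - t| := by
    intro s t
    have hdiff : A s - A t = (a*(Real.cos (θ*s) - Real.cos (θ*t))) • u
        + (a*(Real.sin (θ*s) - Real.sin (θ*t))) • v := by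
      rw [hA_def]
      simp only
      rw [mul_sub, mul_sub, sub_smul, sub_smul]
      abel
    rw [hdiff]
    have h2 := norm_combo hu hv huv (a*(Real.cos (θ*s) - Real.cos (θ*t)))
      (a*(Real.sin (θ*s) - Real.sin (θ*t)))
    have trig : (Real.cos (θ*s) - Real.cos (θ*t))^2 + (Real.sin (θ*s) - Real.sin (θ*t))^2
        = 2 - 2*Real.cos (θ*s - θ*t) := by
      rw [Real.cos_sub]
      linear_combination Real.sin_sq_add_cos_sq (θ*s) + Real.sin_sq_add_cos_sq (θ*t)
    have hcosb : 2 - 2*Real.cos (θ*s - θ*t) ≤ (θ*s - θ*t)^2 := by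
      linarith [Real.one_sub_sq_div_two_le_cos (x := θ*s - θ*t)]
    have hsq : ‖(a*(Real.cos (θ*s) - Real.cos (θ*t))) • u
        + (a*(Real.sin (θ*s) - Real.sin (θ*t))) • v‖^2 ≤ (a*θ*|s - t|)^2 := by
      rw [h2]
      calc (a*(Real.cos (θ*s) - Real.cos (θ*t)))^2 + (a*(Real.sin (θ*s) - Real.sin (θ*t)))^2
          = a^2 * ((Real.cos (θ*s) - Real.cos (θ*t))^2 + (Real.sin (θ*s) - Real.sin (θ*t))^2) := by
            ring
        _ = a^2 * (2 - 2*Real.cos (θ*s - θ*t)) := by rw [trig]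
        _ ≤ a^2 * ((θ*s - θ*t)^2) := mul_le_mul_of_nonneg_left hcosb (sq_nonneg a)
        _ = (a*θ*|s - t|)^2 := by rw [mul_pow, mul_pow, sq_abs]; ring
    have h4 := Real.sqrt_le_sqrt hsq
    rwa [Real.sqrt_sq (norm_nonneg _),
      Real.sqrt_sq (mul_nonneg (mul_nonneg ha.le hθ0) (abs_nonneg _))] at h4
  have hSlip : ∀ s t : ℝ, ‖S s - S t‖ ≤ (b-a)*|s - t| := by
    intro s t
    have hdiff : S s - S t = (((s-t)*(b-a))/b) • w := by
      rw [hS_def]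
      simp only
      rw [show ((s-t)*(b-a))/b = (a + s*(b-a))/b - (a + t*(b-a))/b by ring, sub_smul]
      abel
    rw [hdiff, norm_smul, Real.norm_eq_abs, hwn, abs_div, abs_of_pos hb,
      div_mul_cancel₀ _ hb.ne', abs_mul, abs_of_nonneg (sub_nonneg.2 hab')]
    exact le_of_eq (mul_comm _ _)
  
  obtain ⟨γ, hγ_def⟩ : ∃ γ' : ℝ → EuclideanSpace ℝ (Fin 3),
      γ' = fun t => if t ≤ 1/2 then A (2*t) else S (2*t - 1) := ⟨_, rfl⟩
  have hγA : ∀ t : ℝ, t ≤ 1/2 → γ t = A (2*t) := by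
    intro t ht; rw [hγ_def]; simp only; rw [if_pos ht]
  have hγS : ∀ t : ℝ, 1/2 ≤ t → γ t = S (2*t - 1) := by
    intro t ht
    rcases lt_or_eq_of_le ht with h|h
    · rw [hγ_def]; simp only; rw [if_neg (by linarith)]
    · rw [hγ_def]; simp only; rw [if_pos (by linarith : t ≤ 1/2)]
      rw [← h]
      norm_num
      exact hmatch
  have hAc : Continuous A := by rw [hA_def]; fun_prop
  have hSc : Continuous S := by rw [hS_def]; fun_prop
  have hcont : Continuous γ := by
    rw [hγ_def]
    apply Continuous.if_le
    · exact hAc.comp (by fun_prop)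
    · exact hSc.comp (by fun_prop)
    · exact continuous_id
    · exact continuous_const
    · intro t ht
      rw [ht]
      norm_num
      exact hmatch
  have havoid : ∀ t ∈ Icc (0:ℝ) 1, r < ‖γ t - ξ‖ := by
    intro t ht
    rcases le_total t (1/2) with h|h
    · rw [hγA t h, hAnorm]; exact hx
    · rw [hγS t h, hSnorm _ (by linarith [ht.1])]
      linarith [mul_nonneg (show (0:ℝ) ≤ 2*t-1 by linarith) (sub_nonneg.2 hab')]
  have hg0 : γ 0 = x := by
    rw [hγA 0 (by norm_num), show (2:ℝ)*0 = 0 by norm_num, hA0]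
  have hg1 : γ 1 = y := by
    rw [hγS 1 (by norm_num), show (2:ℝ)*1 - 1 = 1 by norm_num, hS1]
  have hev1 : eVariationOn γ (Icc 0 (1/2)) ≤ ENNReal.ofReal (a*θ) := by
    have hb1 : ∀ s ∈ Icc (0:ℝ) (1/2), ∀ t ∈ Icc (0:ℝ) (1/2),
        ‖γ s - γ t‖ ≤ 2*(a*θ)*|s - t| := by
      intro s hs t ht
      rw [hγA s hs.2, hγA t ht.2]
      calc ‖A (2*s) - A (2*t)‖ ≤ a*θ*|2*s - 2*t| := hAlip (2*s) (2*t)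
        _ = 2*(a*θ)*|s - t| := by
            rw [show (2:ℝ)*s - 2*t = 2*(s-t) by ring, abs_mul, abs_two]; ring
    have h := evar_le_of_lip (show (0:ℝ) ≤ 1/2 by norm_num)
      (by linarith [mul_nonneg ha.le hθ0]) hb1
    rw [show 2*(a*θ)*((1:ℝ)/2 - 0) = a*θ by ring] at h
    exact h
  have hev2 : eVariationOn γ (Icc (1/2) 1) ≤ ENNReal.ofReal (b - a) := by
    have hb2 : ∀ s ∈ Icc (1/2:ℝ) 1, ∀ t ∈ Icc (1/2:ℝ) 1,
        ‖γ s - γ t‖ ≤ 2*(b-a)*|s - t| := by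
      intro s hs t ht
      rw [hγS s hs.1, hγS t ht.1]
      calc ‖S (2*s-1) - S (2*t-1)‖ ≤ (b-a)*|(2*s-1) - (2*t-1)| := hSlip _ _
        _ = 2*(b-a)*|s - t| := by
            rw [show (2*s-1) - (2*t-1) = 2*(s-t) by ring, abs_mul, abs_two]; ring
    have h := evar_le_of_lip (show (1/2:ℝ) ≤ 1 by norm_num)
      (by linarith [sub_nonneg.2 hab']) hb2
    rw [show 2*(b-a)*((1:ℝ) - 1/2) = b - a by ring] at h
    exact h
  have hsplit := eVariationOn.Icc_add_Icc (f := γ) (s := (univ : Set ℝ))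
    (show (0:ℝ) ≤ 1/2 by norm_num) (show (1/2:ℝ) ≤ 1 by norm_num) (Set.mem_univ _)
  simp only [Set.univ_inter] at hsplit
  have hxy2 : ‖x - y‖^2 = (b-a)^2 + 4*(a*b)*Real.sin (θ/2)^2 := by
    have h1 : x - y = a • u - w := by rw [hau, hw_def]; abel
    rw [h1, norm_sub_sq_real, norm_smul, real_inner_smul_left, ← hc_def, hwn, Real.norm_eq_abs,
      hu, abs_of_pos ha, hcb]
    have hhalf : Real.sin (θ/2)^2 = 1/2 - Real.cos θ/2 := by
      have h2 := Real.sin_sq_eq_half_sub (θ/2)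
      rw [show 2*(θ/2) = θ by ring] at h2
      exact h2
    rw [hhalf]; ring
  have hτ : 0 ≤ (b-a)/a := div_nonneg (sub_nonneg.2 hab') ha.le
  have hineq := ineq_norm θ ((b-a)/a) hθ0 hθπ hτ
  have hmul := mul_le_mul_of_nonneg_left hineq (by positivity : (0:ℝ) ≤ a^2)
  have e1 : a^2 * (θ + (b-a)/a)^2 = (a*θ + (b-a))^2 := by field_simp
  have e2 : a^2 * ((π^2/8 + 2) * (((b-a)/a)^2 + 4*(1+(b-a)/a)*Real.sin (θ/2)^2))
      = (π^2/8 + 2) * ((b-a)^2 + 4*(a*b)*Real.sin (θ/2)^2) := by field_simp; ring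
  rw [e1, e2, ← hxy2] at hmul
  have hCsq : (Real.sqrt 2 * Real.sqrt ((π/4)^2 + 1))^2 = π^2/8 + 2 := by
    rw [mul_pow, Real.sq_sqrt (by norm_num : (0:ℝ) ≤ 2), Real.sq_sqrt (by positivity)]
    ring
  have hL0 : 0 ≤ a*θ + (b-a) := by
    have h6 := mul_nonneg ha.le hθ0
    have h7 := sub_nonneg.2 hab'
    linarith
  have hsq2 : (a*θ + (b-a))^2 ≤ (Real.sqrt 2 * Real.sqrt ((π/4)^2 + 1) * ‖x-y‖)^2 := by
    rw [mul_pow, hCsq]; exact hmul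
  have h5 := Real.sqrt_le_sqrt hsq2
  rw [Real.sqrt_sq hL0, Real.sqrt_sq (by positivity)] at h5
  refine ⟨γ, hcont.continuousOn, hg0, hg1, havoid, ?_⟩
  rw [← hsplit]
  calc eVariationOn γ (Icc 0 (1/2)) + eVariationOn γ (Icc (1/2) 1)
      ≤ ENNReal.ofReal (a*θ) + ENNReal.ofReal (b - a) := add_le_add hev1 hev2
    _ = ENNReal.ofReal (a*θ + (b - a)) :=
        (ENNReal.ofReal_add (mul_nonneg ha.le hθ0) (sub_nonneg.2 hab')).symm
    _ ≤ _ := ENNReal.ofReal_le_ofReal h5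

/-- For an open ball `U = ball ξ r` in `ℝ³` and points `x, y` outside `closure U`, there is a
rectifiable path from `x` to `y` avoiding `closure U` of length at most
`√2 · √((π/4)² + 1) · |x − y|`. -/
theorem stmt1 (ξ : EuclideanSpace ℝ (Fin 3)) (r : ℝ) (hr : 0 < r)
    (x y : EuclideanSpace ℝ (Fin 3))
    (hx : x ∉ closure (Metric.ball ξ r)) (hy : y ∉ closure (Metric.ball ξ r)) :
    ∃ γ : ℝ → EuclideanSpace ℝ (Fin 3), ContinuousOn γ (Set.Icc 0 1) ∧
      γ 0 = x ∧ γ 1 = y ∧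
      (∀ t ∈ Set.Icc (0:ℝ) 1, γ t ∉ closure (Metric.ball ξ r)) ∧
      eVariationOn γ (Set.Icc 0 1)
        ≤ ENNReal.ofReal (Real.sqrt 2 * Real.sqrt ((Real.pi/4)^2 + 1) * dist x y) := by
  have hcl : closure (Metric.ball ξ r) = Metric.closedBall ξ r := closure_ball ξ (ne_of_gt hr)
  rw [hcl] at hx hy
  have hx' : r < ‖x - ξ‖ := by
    rw [← dist_eq_norm]
    simpa [Metric.mem_closedBall, not_le] using hx
  have hy' : r < ‖y - ξ‖ := by
    rw [← dist_eq_norm]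
    simpa [Metric.mem_closedBall, not_le] using hy
  have havoid_iff : ∀ z : EuclideanSpace ℝ (Fin 3), r < ‖z - ξ‖ →
      z ∉ closure (Metric.ball ξ r) := by
    intro z hz
    rw [hcl]
    simp only [Metric.mem_closedBall, not_le]
    rw [dist_eq_norm]; exact hz
  rcases le_total (‖x - ξ‖) (‖y - ξ‖) with h|h
  · obtain ⟨γ, hc, h0, h1, hav, hev⟩ := aux ξ r hr.le x y hx' hy' h
    exact ⟨γ, hc, h0, h1, fun t ht => havoid_iff _ (hav t ht), by rwa [dist_eq_norm]⟩
  · obtain ⟨γ, hc, h0, h1, hav, hev⟩ := aux ξ r hr.le y x hy' hx' h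
    refine ⟨fun t => γ (1 - t), ?_, by simp [h1], by simp [h0], ?_, ?_⟩
    · have hmap : Set.MapsTo (fun t : ℝ => 1 - t) (Set.Icc 0 1) (Set.Icc 0 1) := by
        intro t ht
        simp only [Set.mem_Icc] at ht ⊢
        constructor <;> linarith
      exact hc.comp ((continuous_const.sub continuous_id).continuousOn) hmap
    · intro t ht
      exact havoid_iff _ (hav (1-t) ⟨by linarith [ht.2], by linarith [ht.1]⟩)
    · have hanti : AntitoneOn (fun t : ℝ => 1 - t) (Set.Icc 0 1) := by
        intro s _ t _ hst
        simp only
        linarith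
      have hcomp := eVariationOn.comp_eq_of_antitoneOn γ (fun t : ℝ => 1 - t) hanti
      have himg : (fun t : ℝ => 1 - t) '' (Set.Icc 0 1) = Set.Icc (0:ℝ) 1 := by
        ext z
        constructor
        · rintro ⟨t, ht, rfl⟩
          simp only [Set.mem_Icc] at ht ⊢
          constructor <;> linarith
        · intro hz
          simp only [Set.mem_Icc] at hz
          exact ⟨1 - z, by simp only [Set.mem_Icc]; constructor <;> linarith, by ring⟩
      rw [himg] at hcomp
      have heq : (fun t => γ (1 - t)) = γ ∘ (fun t : ℝ => 1 - t) := rfl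
      rw [heq, hcomp, show dist x y = ‖y - x‖ from dist_eq_norm' x y]
      exact hev
end

section
/- Let ξ be the center of an open ball U ⊂ ℝ³ and let x, y ∈ ℝ³ \ closure(U) satisfy (x − ξ)·(y − ξ) ≥ 0. Then there exists a path from x to y in ℝ³ \ closure(U), lying in the half-space {z : (x − ξ)·(z − ξ) ≥ 0}, of length at most √2 · |x − y|. -/
lemma le_of_sq_le_sq'' {a b : ℝ} (ha : 0 ≤ a) (hb : 0 ≤ b) (h : a^2 ≤ b^2) : a ≤ b := by
  nlinarith

lemma radial_proj_lip {E : Type*} [NormedAddCommGroup E] [InnerProductSpace ℝ E]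
    (ρ : ℝ) (hρ : 0 < ρ) (u v : E)
    (hu : ρ ≤ Real.sqrt 2 * ‖u‖) (hv : ρ ≤ Real.sqrt 2 * ‖v‖) :
    ‖(max ‖u‖ ρ / ‖u‖) • u - (max ‖v‖ ρ / ‖v‖) • v‖ ≤ Real.sqrt 2 * ‖u - v‖ := by
  have hsq2 : Real.sqrt 2 ^ 2 = 2 := Real.sq_sqrt (by norm_num)
  have hsqrt2 : (0:ℝ) < Real.sqrt 2 := Real.sqrt_pos.2 (by norm_num)
  have hs : (0:ℝ) < ‖u‖ := by nlinarith [norm_nonneg u]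
  have ht : (0:ℝ) < ‖v‖ := by nlinarith [norm_nonneg v]
  set s := ‖u‖ with hsdef
  set t := ‖v‖ with htdef
  set A := max s ρ with hA
  set B := max t ρ with hB
  have hAs : A ≤ Real.sqrt 2 * s := by
    rcases max_cases s ρ with ⟨h1, h2⟩ | ⟨h1, h2⟩ <;> rw [hA, h1] <;> nlinarith
  have hBt : B ≤ Real.sqrt 2 * t := by
    rcases max_cases t ρ with ⟨h1, h2⟩ | ⟨h1, h2⟩ <;> rw [hB, h1] <;> nlinarith
  have hABst : (A - B)^2 ≤ (s - t)^2 := by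
    have h2 : |A - B| ≤ |s - t| := abs_max_sub_max_le_abs s t ρ
    calc (A-B)^2 = |A-B|^2 := by rw [sq_abs]
      _ ≤ |s-t|^2 := by nlinarith [abs_nonneg (A-B), abs_nonneg (s-t)]
      _ = (s-t)^2 := by rw [sq_abs]
  have hp : (inner ℝ u v : ℝ) ≤ s * t := real_inner_le_norm u v
  apply le_of_sq_le_sq'' (norm_nonneg _) (by positivity)
  have expand : ‖(A / s) • u - (B / t) • v‖^2
      = (A/s)^2 * s^2 - 2 * ((A/s) * (B/t)) * (inner ℝ u v : ℝ) + (B/t)^2 * t^2 := by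
    rw [norm_sub_sq_real, real_inner_smul_left, real_inner_smul_right, norm_smul, norm_smul]
    have h1 : |A / s| = A / s := abs_of_nonneg (by positivity)
    have h2 : |B / t| = B / t := abs_of_nonneg (by positivity)
    rw [Real.norm_eq_abs, Real.norm_eq_abs, h1, h2]
    ring
  rw [expand, mul_pow, hsq2, norm_sub_sq_real]
  have e1 : (A/s)^2 * s^2 = A^2 := by field_simp
  have e2 : (B/t)^2 * t^2 = B^2 := by field_simp
  have e3 : (A/s) * (B/t) * (s*t) = A * B := by field_simp
  have hab2 : (A/s) * (B/t) ≤ 2 := by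
    have h1 : A/s ≤ Real.sqrt 2 := by rw [div_le_iff₀ hs]; linarith
    have h2 : B/t ≤ Real.sqrt 2 := by rw [div_le_iff₀ ht]; linarith
    have h3 : (0:ℝ) ≤ A/s := by positivity
    have h4 : (0:ℝ) ≤ B/t := by positivity
    nlinarith
  rw [e1, e2]
  nlinarith [mul_nonneg (sub_nonneg.2 hab2) (sub_nonneg.2 hp), sq_nonneg (s - t), e3]

section Main
variable {E : Type*} [NormedAddCommGroup E] [InnerProductSpace ℝ E]

theorem stmt2' (ξ : E) (r : ℝ) (hr : 0 < r)
    (x y : E)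
    (hx : x ∉ closure (Metric.ball ξ r)) (hy : y ∉ closure (Metric.ball ξ r))
    (hxy : 0 ≤ @inner ℝ _ _ (x - ξ) (y - ξ)) :
    ∃ γ : ℝ → E, ContinuousOn γ (Set.Icc 0 1) ∧
      γ 0 = x ∧ γ 1 = y ∧
      (∀ t ∈ Set.Icc (0:ℝ) 1, γ t ∉ closure (Metric.ball ξ r) ∧
        0 ≤ @inner ℝ _ _ (x - ξ) (γ t - ξ)) ∧
      eVariationOn γ (Set.Icc 0 1) ≤ ENNReal.ofReal (Real.sqrt 2 * dist x y) := by
  have hcb : closure (Metric.ball ξ r) = Metric.closedBall ξ r := closure_ball ξ hr.ne'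
  rw [hcb] at hx hy ⊢
  set a := x - ξ with ha
  set b := y - ξ with hb
  have hxa : r < ‖a‖ := by
    simpa [ha, Metric.mem_closedBall, not_le, dist_eq_norm] using hx
  have hyb : r < ‖b‖ := by
    simpa [hb, Metric.mem_closedBall, not_le, dist_eq_norm] using hy
  set ρ := min ‖a‖ ‖b‖ with hρdef
  have hrρ : r < ρ := lt_min hxa hyb
  have hρ : 0 < ρ := hr.trans hrρ
  have hρa : ρ ≤ ‖a‖ := min_le_left _ _
  have hρb : ρ ≤ ‖b‖ := min_le_right _ _
  have hsq2 : Real.sqrt 2 ^ 2 = 2 := Real.sq_sqrt (by norm_num)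
  have hsqrt2 : (1:ℝ) ≤ Real.sqrt 2 := by nlinarith [Real.sqrt_nonneg 2]
  set g : ℝ → E := fun t => a + t • (b - a) with hg
  set f : E → E := fun z => (max ‖z‖ ρ / ‖z‖) • z with hf
  set γ : ℝ → E := fun t => ξ + f (g t) with hγ
  have hginner : ∀ t : ℝ, (inner ℝ a (g t) : ℝ) = (1 - t) * ‖a‖^2 + t * (inner ℝ a b : ℝ) := by
    intro t
    simp only [hg, inner_add_right, inner_smul_right, inner_sub_right, real_inner_self_eq_norm_sq]
    ring
  have hgnorm : ∀ t ∈ Set.Icc (0:ℝ) 1, ρ ≤ Real.sqrt 2 * ‖g t‖ := by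
    rintro t ⟨ht0, ht1⟩
    apply le_of_sq_le_sq'' hρ.le (by positivity)
    have hexp : ‖g t‖^2 = ‖a‖^2 + 2 * t * ((inner ℝ a b : ℝ) - ‖a‖^2)
        + t^2 * ‖b - a‖^2 := by
      simp only [hg]
      rw [norm_add_sq_real, inner_smul_right, norm_smul, inner_sub_right,
        real_inner_self_eq_norm_sq, Real.norm_eq_abs, mul_pow, sq_abs]
      ring
    have hba : ‖b - a‖^2 = ‖b‖^2 - 2 * (inner ℝ a b : ℝ) + ‖a‖^2 := by
      rw [norm_sub_sq_real, real_inner_comm]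
    rw [mul_pow, hsq2, hexp, hba]
    nlinarith [mul_nonneg (mul_nonneg ht0 (by linarith : (0:ℝ) ≤ 1 - t)) hxy,
      mul_nonneg (mul_nonneg ht0 ht0) (by nlinarith : (0:ℝ) ≤ ‖b‖^2 - ρ^2),
      mul_nonneg (mul_nonneg (by linarith : (0:ℝ) ≤ 1-t) (by linarith : (0:ℝ) ≤ 1-t))
        (by nlinarith : (0:ℝ) ≤ ‖a‖^2 - ρ^2),
      sq_nonneg (2*t - 1), sq_nonneg ρ, hρ]
  -- basic facts about f
  have hfnorm : ∀ z : E, z ≠ 0 → ‖f z‖ = max ‖z‖ ρ := by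
    intro z hz
    have hz' : (0:ℝ) < ‖z‖ := norm_pos_iff.2 hz
    simp only [hf, norm_smul, Real.norm_eq_abs, abs_of_nonneg (by positivity : (0:ℝ) ≤ max ‖z‖ ρ / ‖z‖)]
    field_simp
  have hfix : ∀ z : E, ρ ≤ ‖z‖ → f z = z := by
    intro z hz
    have hz' : (0:ℝ) < ‖z‖ := lt_of_lt_of_le hρ hz
    simp only [hf, max_eq_left hz, div_self hz'.ne', one_smul]
  have hg0 : g 0 = a := by simp [hg]
  have hg1 : g 1 = b := by simp [hg]
  -- Lipschitz estimate of γ on Icc 0 1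
  have hlip : LipschitzOnWith ((Real.sqrt 2 * dist x y).toNNReal) γ (Set.Icc 0 1) := by
    apply LipschitzOnWith.of_dist_le_mul
    intro s hs t ht
    have hgs : ρ ≤ Real.sqrt 2 * ‖g s‖ := hgnorm s hs
    have hgt : ρ ≤ Real.sqrt 2 * ‖g t‖ := hgnorm t ht
    have key := radial_proj_lip ρ hρ (g s) (g t) hgs hgt
    have hdist : dist (γ s) (γ t) = ‖f (g s) - f (g t)‖ := by
      simp only [hγ, dist_eq_norm]
      congr 1
      abel
    have hgdiff : ‖g s - g t‖ = |s - t| * ‖b - a‖ := by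
      have : g s - g t = (s - t) • (b - a) := by
        simp only [hg, sub_smul]; abel
      rw [this, norm_smul, Real.norm_eq_abs]
    rw [hdist, Real.coe_toNNReal _ (by positivity)]
    calc ‖f (g s) - f (g t)‖ ≤ Real.sqrt 2 * ‖g s - g t‖ := key
      _ = Real.sqrt 2 * ‖b - a‖ * |s - t| := by rw [hgdiff]; ring
      _ = Real.sqrt 2 * dist x y * dist s t := by
          rw [Real.dist_eq]
          congr 2
          rw [dist_eq_norm]
          have : b - a = -(x - y) := by rw [ha, hb]; abel
          rw [this, norm_neg]
  refine ⟨γ, hlip.continuousOn, ?_, ?_, ?_, ?_⟩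
  · simp only [hγ, hg0, hfix a hρa]; rw [ha]; abel
  · simp only [hγ, hg1, hfix b hρb]; rw [hb]; abel
  · rintro t ht
    have hgt : ρ ≤ Real.sqrt 2 * ‖g t‖ := hgnorm t ht
    have hgt0 : g t ≠ 0 := by
      intro h
      rw [h, norm_zero, mul_zero] at hgt
      exact absurd hgt (not_le.2 hρ)
    have hsub : γ t - ξ = f (g t) := by simp only [hγ]; abel
    constructor
    · simp only [Metric.mem_closedBall, not_le, dist_eq_norm, hsub]
      rw [hfnorm _ hgt0]
      exact lt_of_lt_of_le hrρ (le_max_right _ _)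
    · rw [hsub]
      simp only [hf, inner_smul_right]
      apply mul_nonneg
      · positivity
      · rw [hginner t]
        rcases ht with ⟨ht0, ht1⟩
        exact add_nonneg (mul_nonneg (by linarith) (sq_nonneg _)) (mul_nonneg ht0 hxy)
  · have hmaps : Set.MapsTo id (Set.Icc (0:ℝ) 1) (Set.Icc (0:ℝ) 1) := fun z hz => hz
    have h1 := hlip.comp_eVariationOn_le hmaps
    have h2 : eVariationOn id (Set.Icc (0:ℝ) 1) ≤ ENNReal.ofReal 1 := by
      have hm : MonotoneOn (id : ℝ → ℝ) (Set.Icc 0 1) := fun u _ v _ huv => huv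
      have := hm.eVariationOn_le (Set.left_mem_Icc.2 one_pos.le) (Set.right_mem_Icc.2 one_pos.le)
      simpa using this
    have h3 : eVariationOn (γ ∘ id) (Set.Icc (0:ℝ) 1) = eVariationOn γ (Set.Icc (0:ℝ) 1) := rfl
    rw [h3] at h1
    calc eVariationOn γ (Set.Icc (0:ℝ) 1)
        ≤ ((Real.sqrt 2 * dist x y).toNNReal : ENNReal) * eVariationOn id (Set.Icc (0:ℝ) 1) := h1
      _ ≤ ((Real.sqrt 2 * dist x y).toNNReal : ENNReal) * ENNReal.ofReal 1 :=
          mul_le_mul_right h2 _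
      _ = ENNReal.ofReal (Real.sqrt 2 * dist x y) := by
          rw [ENNReal.ofReal_one, mul_one, ENNReal.ofReal]

end Main

/-- If `x, y` lie outside the closed ball `closure (ball ξ r)` and `(x−ξ)·(y−ξ) ≥ 0`, there is a
path from `x` to `y` avoiding the closed ball, lying in the half-space
`{z : (x−ξ)·(z−ξ) ≥ 0}`, of length at most `√2 · |x − y|`. -/
theorem stmt2 (ξ : EuclideanSpace ℝ (Fin 3)) (r : ℝ) (hr : 0 < r)
    (x y : EuclideanSpace ℝ (Fin 3))
    (hx : x ∉ closure (Metric.ball ξ r)) (hy : y ∉ closure (Metric.ball ξ r))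
    (hxy : 0 ≤ @inner ℝ _ _ (x - ξ) (y - ξ)) :
    ∃ γ : ℝ → EuclideanSpace ℝ (Fin 3), ContinuousOn γ (Set.Icc 0 1) ∧
      γ 0 = x ∧ γ 1 = y ∧
      (∀ t ∈ Set.Icc (0:ℝ) 1, γ t ∉ closure (Metric.ball ξ r) ∧
        0 ≤ @inner ℝ _ _ (x - ξ) (γ t - ξ)) ∧
      eVariationOn γ (Set.Icc 0 1) ≤ ENNReal.ofReal (Real.sqrt 2 * dist x y) := by
  exact stmt2' ξ r hr x y hx hy hxy
end

section
/- Let D₀ ⊂ ℝ³ be convex, ε > 0, and let x, y lie in (D₀)_ε = {z ∈ ℝ³ \ closure(D₀) : dist(z, ∂D₀) ≥ ε}, with nearest boundary points q(x), q(y) ∈ ∂D₀ and outward unit normals ν_{q(x)}, ν_{q(y)} there. If ν_{q(x)}·ν_{q(y)} ≥ α for some α ∈ (−1, 0], then the infimum d_ε(x,y) of lengths of paths from x to y staying in (D₀)_ε satisfies d_ε(x,y) ≤ (√2/(1+α))·|x − y|. -/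
open Metric Set
local notation "⟪" x ", " y "⟫_ℝ" => @inner ℝ _ _ x y

section Aux

variable {E : Type*} [NormedAddCommGroup E] [InnerProductSpace ℝ E]

/-- On the segment from `x ∉ closure s` to `z ∈ closure s` there is a frontier point of `s`
at distance at most `dist x z` from `x`. -/
lemma exists_frontier_point_aux (s : Set E) (x z : E) (hx : x ∉ closure s)
    (hz : z ∈ closure s) : ∃ p ∈ frontier s, dist x p ≤ dist x z := by
  classical
  set f : ℝ → E := fun t => x + t • (z - x) with hf
  have hfc : Continuous f := by fun_prop
  set T : Set ℝ := Icc (0 : ℝ) 1 ∩ f ⁻¹' closure s with hT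
  have h1T : (1 : ℝ) ∈ T := by
    refine ⟨⟨zero_le_one, le_rfl⟩, ?_⟩
    simp only [mem_preimage, hf]
    simpa using hz
  have hTne : T.Nonempty := ⟨1, h1T⟩
  have hTbdd : BddBelow T := ⟨0, fun t ht => ht.1.1⟩
  have hTclosed : IsClosed T := isClosed_Icc.inter (isClosed_closure.preimage hfc)
  set t₀ := sInf T with ht₀
  have ht₀T : t₀ ∈ T := hTclosed.csInf_mem hTne hTbdd
  have ht₀pos : 0 < t₀ := by
    rcases lt_or_eq_of_le ht₀T.1.1 with h | h
    · exact h
    · exfalso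
      apply hx
      have h2 : f t₀ ∈ closure s := ht₀T.2
      rw [← h] at h2
      simpa [hf] using h2
  refine ⟨f t₀, ⟨ht₀T.2, ?_⟩, ?_⟩
  · -- f t₀ ∉ interior s
    intro hint
    have hopen : IsOpen (f ⁻¹' interior s) := isOpen_interior.preimage hfc
    rcases Metric.isOpen_iff.1 hopen t₀ hint with ⟨δ, hδ, hball⟩
    set t₁ := max (t₀ / 2) (t₀ - δ / 2) with ht₁
    have ht₁lt : t₁ < t₀ := max_lt (by linarith) (by linarith)
    have ht₁mem : t₁ ∈ Metric.ball t₀ δ := by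
      rw [Metric.mem_ball, Real.dist_eq, abs_lt]
      constructor
      · have h3 : t₀ - δ / 2 ≤ t₁ := le_max_right _ _
        linarith
      · linarith
    have h4 : t₁ ∈ T := by
      refine ⟨⟨?_, le_trans ht₁lt.le ht₀T.1.2⟩, ?_⟩
      · exact le_trans (by linarith : (0:ℝ) ≤ t₀ / 2) (le_max_left _ _)
      · exact subset_closure (interior_subset (hball ht₁mem))
    exact absurd (csInf_le hTbdd h4) (not_le.2 ht₁lt)
  · have h5 : dist x (f t₀) = t₀ * dist x z := by
      simp only [hf, dist_eq_norm]
      rw [show x - (x + t₀ • (z - x)) = t₀ • (x - z) by module, norm_smul,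
        Real.norm_eq_abs, abs_of_nonneg ht₀pos.le, norm_sub_rev]
    rw [h5]
    nlinarith [dist_nonneg (x := x) (y := z), ht₀T.1.2]

/-- Supporting hyperplane inequality at the nearest frontier point. -/
lemma support_ineq_aux (s : Set E) (hconv : Convex ℝ s) (x q : E) (hx : x ∉ closure s)
    (hq : q ∈ frontier s) (hmin : dist x q = Metric.infDist x (frontier s)) :
    ∀ z ∈ closure s, ⟪x - q, z - q⟫_ℝ ≤ 0 := by
  have hqc : q ∈ closure s := frontier_subset_closure hq
  have hmin' : ∀ z ∈ closure s, dist x q ≤ dist x z := by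
    intro z hz
    obtain ⟨p, hp, hple⟩ := exists_frontier_point_aux s x z hx hz
    calc dist x q ≤ dist x p := hmin ▸ Metric.infDist_le_dist_of_mem hp
      _ ≤ dist x z := hple
  have key : ‖x - q‖ = ⨅ w : closure s, ‖x - w‖ := by
    have hne : Nonempty (closure s) := ⟨⟨q, hqc⟩⟩
    apply le_antisymm
    · refine le_ciInf fun w => ?_
      rw [← dist_eq_norm, ← dist_eq_norm]
      exact hmin' w w.2
    · have h := ciInf_le (f := fun w : closure s => ‖x - (w : E)‖)
        ⟨0, by rintro r ⟨w, rfl⟩; exact norm_nonneg _⟩ (⟨q, hqc⟩ : closure s)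
      simpa using h
  exact (norm_eq_iInf_iff_real_inner_le_zero hconv.closure hqc).1 key

/-- Points of the half-space `{z : ⟪z - x, x - q⟫ ≥ 0}` stay in the `ε`-region. -/
lemma region_mem_aux (s : Set E) (hconv : Convex ℝ s) (x q : E) (hx : x ∉ closure s)
    (hq : q ∈ frontier s) (hmin : dist x q = Metric.infDist x (frontier s))
    {ε : ℝ} (hε0 : 0 < ε) (hε : ε ≤ dist x q) (z : E)
    (hz : 0 ≤ ⟪z - x, x - q⟫_ℝ) :
    z ∉ closure s ∧ ε ≤ Metric.infDist z (frontier s) := by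
  have hsup := support_ineq_aux s hconv x q hx hq hmin
  have hqc : q ∈ closure s := frontier_subset_closure hq
  have hdx : dist x q = ‖x - q‖ := dist_eq_norm _ _
  have hdxpos : 0 < ‖x - q‖ := by
    rw [norm_sub_pos_iff]
    intro h; exact hx (h ▸ hqc)
  have hmain : ∀ w ∈ closure s, ‖x - q‖ ≤ dist z w := by
    intro w hw
    have h1 : ⟪x - q, w - q⟫_ℝ ≤ 0 := hsup w hw
    have expand : ⟪z - w, x - q⟫_ℝ
        = ⟪z - x, x - q⟫_ℝ + ‖x - q‖ ^ 2 - ⟪x - q, w - q⟫_ℝ := by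
      have hzw : z - w = z - x + (x - q) - (w - q) := by abel
      rw [hzw, inner_sub_left, inner_add_left, real_inner_self_eq_norm_sq,
        real_inner_comm (w - q)]
    have h2 : ‖x - q‖ ^ 2 ≤ ⟪z - w, x - q⟫_ℝ := by rw [expand]; linarith
    have h3 : ⟪z - w, x - q⟫_ℝ ≤ ‖z - w‖ * ‖x - q‖ := real_inner_le_norm _ _
    rw [dist_eq_norm]
    nlinarith
  constructor
  · intro hzc
    have h4 := hmain z hzc
    rw [dist_self] at h4; linarith
  · rw [Metric.infDist_eq_iInf]
    have : Nonempty (frontier s) := ⟨⟨q, hq⟩⟩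
    refine le_ciInf fun w => ?_
    have h5 := hmain w (frontier_subset_closure w.2)
    calc ε ≤ dist x q := hε
      _ = ‖x - q‖ := hdx
      _ ≤ dist z w := h5

/-- Variation bound for an affine segment. -/
lemma segment_eVar_aux (A d : E) {p r : ℝ} (hpr : p ≤ r) :
    eVariationOn (fun t => A + t • d) (Icc p r) ≤ ENNReal.ofReal (‖d‖ * (r - p)) := by
  have hlip : LipschitzOnWith ‖d‖₊ (fun t : ℝ => A + t • d) (Icc p r) := by
    apply LipschitzWith.lipschitzOnWith
    apply LipschitzWith.of_dist_le_mul
    intro s t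
    rw [dist_eq_norm, show A + s • d - (A + t • d) = (s - t) • d by module, norm_smul,
      coe_nnnorm, Real.dist_eq, Real.norm_eq_abs, mul_comm]
  have h2 : eVariationOn (id : ℝ → ℝ) (Icc p r) ≤ ENNReal.ofReal (r - p) := by
    have h := (monotone_id.monotoneOn (Icc p r)).eVariationOn_le (a := p) (b := r)
      ⟨le_rfl, hpr⟩ ⟨hpr, le_rfl⟩
    simpa using h
  calc eVariationOn (fun t => A + t • d) (Icc p r)
      ≤ ‖d‖₊ * eVariationOn (id : ℝ → ℝ) (Icc p r) := by
        simpa [Function.comp] using hlip.comp_eVariationOn_le (Set.mapsTo_id (Icc p r))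
    _ ≤ ‖d‖₊ * ENNReal.ofReal (r - p) := mul_le_mul_right h2 _
    _ = ENNReal.ofReal (‖d‖ * (r - p)) := by
        rw [← ENNReal.ofReal_coe_nnreal, coe_nnnorm, ← ENNReal.ofReal_mul (norm_nonneg _)]

end Aux


private lemma arith_sq_eq {A B : ℝ} (h1 : 0 ≤ A) (h3 : 0 ≤ B) (h4 : A ^ 2 = B ^ 2) : A = B := by
  nlinarith

private lemma arith_K1 {α : ℝ} (h1 : -1 < α) (h2 : α ≤ 0) : 1 ≤ Real.sqrt 2 / (1 + α) := by
  have hs : (1 : ℝ) ≤ Real.sqrt 2 := by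
    have h := Real.sqrt_le_sqrt (show (1:ℝ) ≤ 2 by norm_num)
    simpa using h
  rw [le_div_iff₀ (by linarith)]
  nlinarith

private lemma arith_seg {K r : ℝ} (hK : 1 ≤ K) (hr : 0 ≤ r) : r * (1 - 0) ≤ K * r := by
  nlinarith

private lemma arith_s0 {c α : ℝ} (hαc : α ≤ c) (hα1 : -1 < α) (hc1 : c < 1) :
    0 < 1 - c ^ 2 := by nlinarith

private lemma arith_key1 {a b c α : ℝ} (ha : 0 < a) (hb : 0 < b) (hαc : α ≤ c)
    (hα1 : -1 < α) (hα2 : α ≤ 0) :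
    (a + b) ^ 2 * (1 + α) ^ 2 ≤ 2 * (a ^ 2 + 2 * a * b * c + b ^ 2) := by
  nlinarith [mul_nonneg (mul_nonneg ha.le hb.le) (sub_nonneg.2 hαc),
    mul_nonneg (sq_nonneg (a - b)) (show (0:ℝ) ≤ 1 - 2 * α - α ^ 2 by nlinarith),
    mul_nonneg (mul_nonneg ha.le hb.le) (show (0:ℝ) ≤ -α * (1 + α) by nlinarith)]

private lemma arith_T {a b c α s0 h2 : ℝ} (ha : 0 < a) (hb : 0 < b) (hαc : α ≤ c)
    (hα1 : -1 < α) (hα2 : α ≤ 0) (hs0 : 0 < s0) (hh2 : 0 ≤ h2) :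
    (a + b) ^ 2 / s0 + h2 ≤ 2 / (1 + α) ^ 2 * ((a ^ 2 + 2 * a * b * c + b ^ 2) / s0 + h2) := by
  have h1α : (0:ℝ) < 1 + α := by linarith
  have hpow : (0:ℝ) < (1 + α) ^ 2 := pow_pos h1α 2
  have hfrac : (1:ℝ) ≤ 2 / (1 + α) ^ 2 := by
    rw [le_div_iff₀ hpow]; nlinarith
  have key1 := arith_key1 ha hb hαc hα1 hα2
  have h9 : (a + b) ^ 2 ≤ 2 / (1 + α) ^ 2 * (a ^ 2 + 2 * a * b * c + b ^ 2) := by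
    rw [div_mul_eq_mul_div, le_div_iff₀ hpow]
    linarith
  have e1 : (a + b) ^ 2 / s0 ≤ 2 / (1 + α) ^ 2 * ((a ^ 2 + 2 * a * b * c + b ^ 2) / s0) := by
    calc (a + b) ^ 2 / s0 ≤ (2 / (1 + α) ^ 2 * (a ^ 2 + 2 * a * b * c + b ^ 2)) / s0 := by
          gcongr
      _ = 2 / (1 + α) ^ 2 * ((a ^ 2 + 2 * a * b * c + b ^ 2) / s0) := by ring
  have e2 : h2 ≤ 2 / (1 + α) ^ 2 * h2 := by nlinarith
  rw [mul_add]
  linarith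

set_option maxHeartbeats 2000000

/-- Lemma 4.5: for a convex obstacle `D₀` and points `x, y` of `(D₀)_ε` whose outward unit
normals at the nearest boundary points satisfy `ν_{q(x)}·ν_{q(y)} ≥ α` with `α ∈ (−1,0]`, the
intrinsic distance in `(D₀)_ε` satisfies `d_ε(x,y) ≤ (√2/(1+α))·|x−y|`; we exhibit a connecting
path in `(D₀)_ε` of length at most this bound. -/
theorem stmt13 (D₀ : Set (EuclideanSpace ℝ (Fin 3)))
    (hconv : Convex ℝ D₀) (hopen : IsOpen D₀) (hne : D₀.Nonempty)
    (hbd : Bornology.IsBounded D₀)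
    (ε α : ℝ) (hε : 0 < ε) (hα : α ∈ Set.Ioc (-1:ℝ) 0)
    (x y qx qy : EuclideanSpace ℝ (Fin 3))
    (hx : x ∉ closure D₀) (hy : y ∉ closure D₀)
    (hxε : ε ≤ Metric.infDist x (frontier D₀)) (hyε : ε ≤ Metric.infDist y (frontier D₀))
    (hqx : qx ∈ frontier D₀ ∧ dist x qx = Metric.infDist x (frontier D₀))
    (hqy : qy ∈ frontier D₀ ∧ dist y qy = Metric.infDist y (frontier D₀))
    (hcos : α ≤ @inner ℝ _ _ ((dist x qx)⁻¹ • (x - qx)) ((dist y qy)⁻¹ • (y - qy))) :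
    ∃ γ : ℝ → EuclideanSpace ℝ (Fin 3), ContinuousOn γ (Set.Icc 0 1) ∧
      γ 0 = x ∧ γ 1 = y ∧
      (∀ t ∈ Set.Icc (0:ℝ) 1, γ t ∉ closure D₀ ∧ ε ≤ Metric.infDist (γ t) (frontier D₀)) ∧
      eVariationOn γ (Set.Icc 0 1) ≤ ENNReal.ofReal (Real.sqrt 2 / (1 + α) * dist x y) := by
  obtain ⟨hqx1, hqx2⟩ := hqx
  obtain ⟨hqy1, hqy2⟩ := hqy
  obtain ⟨hα1, hα2⟩ := hα
  set dx := dist x qx with hdxdef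
  set dy := dist y qy with hdydef
  have hεdx : ε ≤ dx := by rw [hqx2]; exact hxε
  have hεdy : ε ≤ dy := by rw [hqy2]; exact hyε
  have hdx0 : 0 < dx := lt_of_lt_of_le hε hεdx
  have hdy0 : 0 < dy := lt_of_lt_of_le hε hεdy
  obtain ⟨u, hu⟩ : ∃ u : EuclideanSpace ℝ (Fin 3), u = (dx)⁻¹ • (x - qx) := ⟨_, rfl⟩
  obtain ⟨v, hv⟩ : ∃ v : EuclideanSpace ℝ (Fin 3), v = (dy)⁻¹ • (y - qy) := ⟨_, rfl⟩
  have hxqn : ‖x - qx‖ = dx := (dist_eq_norm x qx).symm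
  have hyqn : ‖y - qy‖ = dy := (dist_eq_norm y qy).symm
  have hxu : x - qx = dx • u := by
    rw [hu, smul_smul, mul_inv_cancel₀ hdx0.ne', one_smul]
  have hyv : y - qy = dy • v := by
    rw [hv, smul_smul, mul_inv_cancel₀ hdy0.ne', one_smul]
  have hnu : ‖u‖ = 1 := by
    rw [hu, norm_smul, Real.norm_eq_abs, abs_of_pos (inv_pos.2 hdx0), hxqn,
      inv_mul_cancel₀ hdx0.ne']
  have hnv : ‖v‖ = 1 := by
    rw [hv, norm_smul, Real.norm_eq_abs, abs_of_pos (inv_pos.2 hdy0), hyqn,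
      inv_mul_cancel₀ hdy0.ne']
  have memx : ∀ z, 0 ≤ ⟪z - x, x - qx⟫_ℝ →
      z ∉ closure D₀ ∧ ε ≤ Metric.infDist z (frontier D₀) :=
    fun z hz => region_mem_aux D₀ hconv x qx hx hqx1 hqx2 hε hεdx z hz
  have memy : ∀ z, 0 ≤ ⟪z - y, y - qy⟫_ℝ →
      z ∉ closure D₀ ∧ ε ≤ Metric.infDist z (frontier D₀) :=
    fun z hz => region_mem_aux D₀ hconv y qy hy hqy1 hqy2 hε hεdy z hz
  have h1α : 0 < 1 + α := by linarith
  have hK1 : 1 ≤ Real.sqrt 2 / (1 + α) := arith_K1 hα1 hα2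
  have hdistxy : dist x y = ‖y - x‖ := by rw [dist_eq_norm, norm_sub_rev]
  -- Case 1: y is in the half-space of x
  rcases le_or_gt 0 (⟪y - x, u⟫_ℝ) with hA | hA
  · refine ⟨fun t => x + t • (y - x), (by fun_prop : Continuous _).continuousOn,
      by simp, by simp, ?_, ?_⟩
    · intro t ht
      apply memx
      rw [add_sub_cancel_left, hxu, real_inner_smul_left, real_inner_smul_right]
      exact mul_nonneg ht.1 (mul_nonneg hdx0.le hA)
    · calc eVariationOn (fun t => x + t • (y - x)) (Icc 0 1)
          ≤ ENNReal.ofReal (‖y - x‖ * (1 - 0)) := segment_eVar_aux x (y - x) zero_le_one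
        _ ≤ ENNReal.ofReal (Real.sqrt 2 / (1 + α) * dist x y) := by
            apply ENNReal.ofReal_le_ofReal
            rw [hdistxy]
            exact arith_seg hK1 (norm_nonneg (y - x))
  rcases le_or_gt 0 (⟪x - y, v⟫_ℝ) with hB | hB
  -- Case 2: x is in the half-space of y
  · refine ⟨fun t => x + t • (y - x), (by fun_prop : Continuous _).continuousOn,
      by simp, by simp, ?_, ?_⟩
    · intro t ht
      apply memy
      rw [show x + t • (y - x) - y = (1 - t) • (x - y) by module, hyv,
        real_inner_smul_left, real_inner_smul_right]
      exact mul_nonneg (by linarith [ht.2]) (mul_nonneg hdy0.le hB)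
    · calc eVariationOn (fun t => x + t • (y - x)) (Icc 0 1)
          ≤ ENNReal.ofReal (‖y - x‖ * (1 - 0)) := segment_eVar_aux x (y - x) zero_le_one
        _ ≤ ENNReal.ofReal (Real.sqrt 2 / (1 + α) * dist x y) := by
            apply ENNReal.ofReal_le_ofReal
            rw [hdistxy]
            exact arith_seg hK1 (norm_nonneg (y - x))
  -- Case 3: the two-segment path through a corner point
  · obtain ⟨a, hadef⟩ : ∃ a : ℝ, a = -⟪y - x, u⟫_ℝ := ⟨_, rfl⟩
    obtain ⟨b, hbdef⟩ : ∃ b : ℝ, b = ⟪y - x, v⟫_ℝ := ⟨_, rfl⟩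
    obtain ⟨c, hcdef⟩ : ∃ c : ℝ, c = ⟪u, v⟫_ℝ := ⟨_, rfl⟩
    have ha : 0 < a := by rw [hadef]; linarith
    have hb : 0 < b := by
      rw [hbdef]
      have h6 : ⟪x - y, v⟫_ℝ = -⟪y - x, v⟫_ℝ := by
        rw [show x - y = -(y - x) by abel, inner_neg_left]
      linarith [hB, h6.symm.le]
    have hαc : α ≤ c := by rw [hcdef, hu, hv]; exact hcos
    have hcle : c ≤ 1 := by
      have h7 := real_inner_le_norm u v
      rw [hnu, hnv] at h7
      rw [hcdef]
      simpa using h7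
    have hc1 : c < 1 := by
      rcases lt_or_eq_of_le hcle with h | h
      · exact h
      · exfalso
        have huveq : u = v := by
          refine (inner_eq_one_iff_of_norm_eq_one (𝕜 := ℝ) hnu hnv).1 ?_
          rw [← hcdef]; exact h
        have h10 : a = -b := by rw [hadef, hbdef, huveq]
        linarith
    have hs0 : 0 < 1 - c ^ 2 := arith_s0 hαc hα1 hc1
    obtain ⟨s0, hs0def⟩ : ∃ s0 : ℝ, s0 = 1 - c ^ 2 := ⟨_, rfl⟩
    have hs0' : 0 < s0 := by rw [hs0def]; exact hs0
    have hs0ne : s0 ≠ 0 := hs0'.ne'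
    have hs0ne2 : (1:ℝ) - c ^ 2 ≠ 0 := hs0.ne' 
    obtain ⟨p0, hp0⟩ : ∃ p0 : ℝ, p0 = -(c * b) / s0 := ⟨_, rfl⟩
    obtain ⟨q0, hq0⟩ : ∃ q0 : ℝ, q0 = b / s0 := ⟨_, rfl⟩
    obtain ⟨p1, hp1⟩ : ∃ p1 : ℝ, p1 = (-a - c * b) / s0 := ⟨_, rfl⟩
    obtain ⟨q1, hq1⟩ : ∃ q1 : ℝ, q1 = (b + c * a) / s0 := ⟨_, rfl⟩
    obtain ⟨θ, hθ⟩ : ∃ θ : ℝ, θ = b / (a + b) := ⟨_, rfl⟩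
    obtain ⟨P, hP⟩ : ∃ P : EuclideanSpace ℝ (Fin 3), P = p0 • u + q0 • v := ⟨_, rfl⟩
    obtain ⟨wpar, hwpar⟩ : ∃ wpar : EuclideanSpace ℝ (Fin 3), wpar = p1 • u + q1 • v := ⟨_, rfl⟩
    obtain ⟨wperp, hwperp⟩ : ∃ wperp : EuclideanSpace ℝ (Fin 3), wperp = (y - x) - wpar := ⟨_, rfl⟩
    obtain ⟨m, hm⟩ : ∃ m : EuclideanSpace ℝ (Fin 3), m = x + (P + θ • wperp) := ⟨_, rfl⟩
    have huu : ⟪u, u⟫_ℝ = 1 := by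
      rw [real_inner_self_eq_norm_mul_norm, hnu]; norm_num
    have hvv : ⟪v, v⟫_ℝ = 1 := by
      rw [real_inner_self_eq_norm_mul_norm, hnv]; norm_num
    have huv : ⟪u, v⟫_ℝ = c := hcdef.symm
    have hvu : ⟪v, u⟫_ℝ = c := by rw [real_inner_comm]; exact huv
    have hwu : ⟪y - x, u⟫_ℝ = -a := by rw [hadef]; ring
    have hwv : ⟪y - x, v⟫_ℝ = b := hbdef.symm
    have hPu : ⟪P, u⟫_ℝ = 0 := by
      rw [hP, inner_add_left, real_inner_smul_left, real_inner_smul_left, huu, hvu,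
        hp0, hq0]
      field_simp
      try left
      try ring
    have hPv : ⟪P, v⟫_ℝ = b := by
      rw [hP, inner_add_left, real_inner_smul_left, real_inner_smul_left, huv, hvv,
        hp0, hq0, hs0def]
      field_simp
      ring
    have hwparu : ⟪wpar, u⟫_ℝ = -a := by
      rw [hwpar, inner_add_left, real_inner_smul_left, real_inner_smul_left, huu, hvu,
        hp1, hq1, hs0def]
      field_simp
      ring
    have hwparv : ⟪wpar, v⟫_ℝ = b := by
      rw [hwpar, inner_add_left, real_inner_smul_left, real_inner_smul_left, huv, hvv,
        hp1, hq1, hs0def]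
      field_simp
      ring
    have hperpu : ⟪wperp, u⟫_ℝ = 0 := by
      rw [hwperp, inner_sub_left, hwu, hwparu]; ring
    have hperpv : ⟪wperp, v⟫_ℝ = 0 := by
      rw [hwperp, inner_sub_left, hwv, hwparv]; ring
    have hperpu' : ⟪u, wperp⟫_ℝ = 0 := by rw [real_inner_comm]; exact hperpu
    have hperpv' : ⟪v, wperp⟫_ℝ = 0 := by rw [real_inner_comm]; exact hperpv
    have hPperp : ⟪P, wperp⟫_ℝ = 0 := by
      rw [hP, inner_add_left, real_inner_smul_left, real_inner_smul_left,
        hperpu', hperpv']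
      ring
    have hwparperp : ⟪wpar, wperp⟫_ℝ = 0 := by
      rw [hwpar, inner_add_left, real_inner_smul_left, real_inner_smul_left,
        hperpu', hperpv']
      ring
    obtain ⟨Q, hQ⟩ : ∃ Q : EuclideanSpace ℝ (Fin 3), Q = P - wpar := ⟨_, rfl⟩
    have hQu : ⟪Q, u⟫_ℝ = a := by rw [hQ, inner_sub_left, hPu, hwparu]; ring
    have hQv : ⟪Q, v⟫_ℝ = 0 := by rw [hQ, inner_sub_left, hPv, hwparv]; ring
    have hQperp : ⟪Q, wperp⟫_ℝ = 0 := by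
      rw [hQ, inner_sub_left, hPperp, hwparperp]; ring
    -- norms
    have hPu' : ⟪u, P⟫_ℝ = 0 := by rw [real_inner_comm]; exact hPu
    have hPv' : ⟪v, P⟫_ℝ = b := by rw [real_inner_comm]; exact hPv
    have hQu' : ⟪u, Q⟫_ℝ = a := by rw [real_inner_comm]; exact hQu
    have hQv' : ⟪v, Q⟫_ℝ = 0 := by rw [real_inner_comm]; exact hQv
    have hwparu' : ⟪u, wpar⟫_ℝ = -a := by rw [real_inner_comm]; exact hwparu
    have hwparv' : ⟪v, wpar⟫_ℝ = b := by rw [real_inner_comm]; exact hwparv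
    have hP2 : ‖P‖ ^ 2 = b ^ 2 / s0 := by
      have e : ‖P‖ ^ 2 = p0 * ⟪u, P⟫_ℝ + q0 * ⟪v, P⟫_ℝ := by
        conv_lhs => rw [← real_inner_self_eq_norm_sq, hP]
        rw [inner_add_left, real_inner_smul_left, real_inner_smul_left, ← hP]
      rw [e, hPu', hPv', hq0]
      ring
    have hQ' : Q = (p0 - p1) • u + (q0 - q1) • v := by rw [hQ, hP, hwpar]; module
    have hQ2 : ‖Q‖ ^ 2 = a ^ 2 / s0 := by
      have e : ‖Q‖ ^ 2 = (p0 - p1) * ⟪u, Q⟫_ℝ + (q0 - q1) * ⟪v, Q⟫_ℝ := by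
        conv_lhs => rw [← real_inner_self_eq_norm_sq, hQ']
        rw [inner_add_left, real_inner_smul_left, real_inner_smul_left, ← hQ']
      rw [e, hQu', hQv', hp0, hp1, hs0def]
      field_simp
      ring
    have hwpar2 : ‖wpar‖ ^ 2 = (a ^ 2 + 2 * a * b * c + b ^ 2) / s0 := by
      have e : ‖wpar‖ ^ 2 = p1 * ⟪u, wpar⟫_ℝ + q1 * ⟪v, wpar⟫_ℝ := by
        conv_lhs => rw [← real_inner_self_eq_norm_sq, hwpar]
        rw [inner_add_left, real_inner_smul_left, real_inner_smul_left, ← hwpar]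
      rw [e, hwparu', hwparv', hp1, hq1, hs0def]
      field_simp
      ring
    obtain ⟨h2, hh2def⟩ : ∃ h2 : ℝ, h2 = ‖wperp‖ ^ 2 := ⟨_, rfl⟩
    have hh2 : 0 ≤ h2 := by rw [hh2def]; positivity
    have hw2 : ‖y - x‖ ^ 2 = (a ^ 2 + 2 * a * b * c + b ^ 2) / s0 + h2 := by
      have hdecomp : y - x = wpar + wperp := by rw [hwperp]; abel
      rw [hdecomp, norm_add_sq_real, hwparperp, hwpar2, hh2def]
      ring
    have hab : 0 < a + b := by linarith
    have hmx : m - x = P + θ • wperp := by rw [hm]; abel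
    have hmy : m - y = Q + (θ - 1) • wperp := by
      rw [hm, hQ, hwperp]; module
    have hmx2 : ‖m - x‖ ^ 2 = b ^ 2 / s0 + θ ^ 2 * h2 := by
      rw [hmx, norm_add_sq_real, real_inner_smul_right, hPperp, hP2, norm_smul,
        Real.norm_eq_abs, mul_pow, sq_abs, hh2def]
      ring
    have hmy2 : ‖m - y‖ ^ 2 = a ^ 2 / s0 + (1 - θ) ^ 2 * h2 := by
      rw [hmy, norm_add_sq_real, real_inner_smul_right, hQperp, hQ2, norm_smul,
        Real.norm_eq_abs, mul_pow, sq_abs, hh2def]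
      ring
    -- the corner point is in both half-spaces
    have hmxu : ⟪m - x, u⟫_ℝ = 0 := by
      rw [hmx, inner_add_left, real_inner_smul_left, hPu, hperpu]; ring
    have hmyv : ⟪m - y, v⟫_ℝ = 0 := by
      rw [hmy, inner_add_left, real_inner_smul_left, hQv, hperpv]; ring
    -- the length bound
    obtain ⟨T, hT⟩ : ∃ T : ℝ, T = (a + b) ^ 2 / s0 + h2 := ⟨_, rfl⟩
    have hTnn : 0 ≤ T := by
      rw [hT]
      exact add_nonneg (div_nonneg (sq_nonneg _) hs0'.le) hh2
    have hmxval : ‖m - x‖ = b / (a + b) * Real.sqrt T := by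
      apply arith_sq_eq (norm_nonneg _)
        (mul_nonneg (div_nonneg hb.le hab.le) (Real.sqrt_nonneg _))
      rw [mul_pow, Real.sq_sqrt hTnn, hmx2, hT, hθ]
      field_simp
    have hmyval : ‖m - y‖ = a / (a + b) * Real.sqrt T := by
      apply arith_sq_eq (norm_nonneg _)
        (mul_nonneg (div_nonneg ha.le hab.le) (Real.sqrt_nonneg _))
      rw [mul_pow, Real.sq_sqrt hTnn, hmy2, hT, hθ]
      field_simp
      ring
    have hsum : ‖m - x‖ + ‖m - y‖ = Real.sqrt T := by
      rw [hmxval, hmyval]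
      field_simp
      ring
    have hKsq : (Real.sqrt 2 / (1 + α)) ^ 2 = 2 / (1 + α) ^ 2 := by
      rw [div_pow, Real.sq_sqrt (by norm_num : (0:ℝ) ≤ 2)]
    have hT_le : T ≤ (Real.sqrt 2 / (1 + α)) ^ 2 * ‖y - x‖ ^ 2 := by
      rw [hKsq, hw2, hT]
      have hs0' : 0 < s0 := by rw [hs0def]; exact hs0
      exact arith_T ha hb hαc hα1 hα2 hs0' hh2
    have hsqT : Real.sqrt T ≤ Real.sqrt 2 / (1 + α) * ‖y - x‖ := by
      have h8 := Real.sqrt_le_sqrt hT_le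
      rwa [show (Real.sqrt 2 / (1 + α)) ^ 2 * ‖y - x‖ ^ 2
          = (Real.sqrt 2 / (1 + α) * ‖y - x‖) ^ 2 by ring,
        Real.sqrt_sq (by positivity)] at h8
    have hfinal : ‖m - x‖ + ‖m - y‖ ≤ Real.sqrt 2 / (1 + α) * dist x y := by
      rw [hsum, hdistxy]; exact hsqT
    refine ⟨fun t => if t ≤ 1/2 then x + (2*t) • (m - x) else y + (2 - 2*t) • (m - y),
      ?_, ?_, ?_, ?_, ?_⟩
    · apply Continuous.continuousOn
      apply Continuous.if_le (by fun_prop) (by fun_prop) continuous_id continuous_const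
      intro t ht
      simp only [id_eq] at ht
      rw [ht]
      module
    · norm_num
    · norm_num
    · intro t ht
      by_cases htl : t ≤ 1/2
      · simp only [if_pos htl]
        apply memx
        rw [add_sub_cancel_left, hxu, real_inner_smul_left, real_inner_smul_right, hmxu]
        simp
      · simp only [if_neg htl]
        apply memy
        rw [add_sub_cancel_left, hyv, real_inner_smul_left, real_inner_smul_right, hmyv]
        simp
    · have hsplit := eVariationOn.Icc_add_Icc
        (f := fun t : ℝ => if t ≤ 1/2 then x + (2*t) • (m - x) else y + (2 - 2*t) • (m - y))
        (s := (univ : Set ℝ)) (a := (0:ℝ)) (b := 1/2) (c := 1)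
        (by norm_num) (by norm_num) (mem_univ _)
      simp only [univ_inter] at hsplit
      rw [← hsplit]
      have hv1 : eVariationOn
          (fun t : ℝ => if t ≤ 1/2 then x + (2*t) • (m - x) else y + (2 - 2*t) • (m - y))
          (Icc 0 (1/2))
          = eVariationOn (fun t : ℝ => x + t • ((2:ℝ) • (m - x))) (Icc 0 (1/2)) := by
        apply eVariationOn.eq_of_eqOn
        intro t ht
        simp only [if_pos ht.2, smul_smul, mul_comm]
      have hv2 : eVariationOn
          (fun t : ℝ => if t ≤ 1/2 then x + (2*t) • (m - x) else y + (2 - 2*t) • (m - y))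
          (Icc (1/2) 1)
          = eVariationOn (fun t : ℝ => (y + (2:ℝ) • (m - y)) + t • ((-2:ℝ) • (m - y)))
            (Icc (1/2) 1) := by
        apply eVariationOn.eq_of_eqOn
        intro t ht
        by_cases h : t ≤ 1/2
        · have heq : t = 1/2 := le_antisymm h ht.1
          subst heq
          simp only [if_pos h]
          module
        · simp only [if_neg h]
          module
      rw [hv1, hv2]
      calc eVariationOn (fun t : ℝ => x + t • ((2:ℝ) • (m - x))) (Icc 0 (1/2))
            + eVariationOn (fun t : ℝ => (y + (2:ℝ) • (m - y)) + t • ((-2:ℝ) • (m - y)))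
              (Icc (1/2) 1)
          ≤ ENNReal.ofReal (‖(2:ℝ) • (m - x)‖ * (1/2 - 0))
            + ENNReal.ofReal (‖(-2:ℝ) • (m - y)‖ * (1 - 1/2)) := by
            exact add_le_add (segment_eVar_aux _ _ (by norm_num))
              (segment_eVar_aux _ _ (by norm_num))
        _ = ENNReal.ofReal ‖m - x‖ + ENNReal.ofReal ‖m - y‖ := by
            rw [norm_smul, norm_smul]
            rw [show ‖(2:ℝ)‖ * ‖m - x‖ * (1/2 - 0) = ‖m - x‖ by
                rw [Real.norm_of_nonneg (by norm_num : (0:ℝ) ≤ 2)]; ring,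
              show ‖(-2:ℝ)‖ * ‖m - y‖ * (1 - 1/2) = ‖m - y‖ by
                rw [norm_neg, Real.norm_of_nonneg (by norm_num : (0:ℝ) ≤ 2)]; ring]
        _ = ENNReal.ofReal (‖m - x‖ + ‖m - y‖) := by
            rw [ENNReal.ofReal_add (norm_nonneg _) (norm_nonneg _)]
        _ ≤ ENNReal.ofReal (Real.sqrt 2 / (1 + α) * dist x y) :=
            ENNReal.ofReal_le_ofReal hfinal
end

section
/- Let K_ε(x,y;t) be the Dirichlet heat kernel of the open ball of radius ε centered at the origin in ℝ³. Then for all t > 0, K_ε(0,0;t) ≥ (4πt)^{−3/2} e^{−9π²t/(4ε²)}. -/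
open Real MeasureTheory Set Filter intervalIntegral

noncomputable def fg (s x : ℝ) : ℝ := x^2 * Real.exp (-(s*x^2))
noncomputable def ph (s x : ℝ) : ℝ := (2*x - 2*s*x^3) * Real.exp (-(s*x^2))
noncomputable def Lf (s x : ℝ) : ℝ := ph s x - 2*(Real.sqrt s)⁻¹ * Real.exp (-(s*x^2))

lemma hasDerivAt_fg (s x : ℝ) : HasDerivAt (fg s) (ph s x) x := by
  have h1 : HasDerivAt (fun x : ℝ => x^2) (2*x) x := by
    simpa using (hasDerivAt_pow 2 x)
  have h2 : HasDerivAt (fun x : ℝ => Real.exp (-(s*x^2))) ((-(s*(2*x))) * Real.exp (-(s*x^2))) x := by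
    have hx : HasDerivAt (fun x : ℝ => -(s*x^2)) (-(s*(2*x))) x := by
      simpa [Pi.neg_def] using ((hasDerivAt_pow 2 x).const_mul s).neg
    simpa [mul_comm] using hx.exp
  have := h1.mul h2
  refine this.congr_deriv ?_
  unfold ph; ring

lemma hasDerivAt_ph (s x : ℝ) :
    HasDerivAt (ph s) ((4*s^2*x^4 - 10*s*x^2 + 2) * Real.exp (-(s*x^2))) x := by
  have h1 : HasDerivAt (fun x : ℝ => 2*x - 2*s*x^3) (2 - 2*s*(3*x^2)) x := by
    have : HasDerivAt (fun x : ℝ => x^3) (3*x^2) x := by simpa using (hasDerivAt_pow 3 x)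
    simpa [Pi.sub_def] using ((hasDerivAt_id x).const_mul 2).sub ((this.const_mul (2*s)))
  have h2 : HasDerivAt (fun x : ℝ => Real.exp (-(s*x^2))) ((-(s*(2*x))) * Real.exp (-(s*x^2))) x := by
    have hx : HasDerivAt (fun x : ℝ => -(s*x^2)) (-(s*(2*x))) x := by
      simpa [Pi.neg_def] using ((hasDerivAt_pow 2 x).const_mul s).neg
    simpa [mul_comm] using hx.exp
  have := h1.mul h2
  refine this.congr_deriv ?_
  ring

lemma hasDerivAt_Lf {s : ℝ} (hs : 0 < s) (x : ℝ) :
    HasDerivAt (Lf s) ((4*s^2*x^4 - 10*s*x^2 + 2 + 4*Real.sqrt s*x) * Real.exp (-(s*x^2))) x := by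
  have h2 : HasDerivAt (fun x : ℝ => Real.exp (-(s*x^2))) ((-(s*(2*x))) * Real.exp (-(s*x^2))) x := by
    have hx : HasDerivAt (fun x : ℝ => -(s*x^2)) (-(s*(2*x))) x := by
      simpa [Pi.neg_def] using ((hasDerivAt_pow 2 x).const_mul s).neg
    simpa [mul_comm] using hx.exp
  have := (hasDerivAt_ph s x).sub ((h2.const_mul (2*(Real.sqrt s)⁻¹)))
  refine this.congr_deriv ?_
  symm
  have h3 : Real.sqrt s * Real.sqrt s = s := Real.mul_self_sqrt hs.le
  have hne : Real.sqrt s ≠ 0 := by positivity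
  have hσ : (Real.sqrt s)⁻¹ * Real.sqrt s = 1 := inv_mul_cancel₀ hne
  linear_combination (4*x*Real.exp (-(s*x^2))*(Real.sqrt s)⁻¹) * h3
    - (4*x*Real.exp (-(s*x^2))*Real.sqrt s) * hσ

lemma Lf_deriv_nonneg {s : ℝ} (hs : 0 < s) {x : ℝ} (hx : 0 ≤ x) :
    0 ≤ (4*s^2*x^4 - 10*s*x^2 + 2 + 4*Real.sqrt s*x) * Real.exp (-(s*x^2)) := by
  have hy0 : 0 ≤ Real.sqrt s * x := mul_nonneg (Real.sqrt_nonneg s) hx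
  set y := Real.sqrt s * x with hy
  have h2 : y^2 = s * x^2 := by
    rw [hy, mul_pow, Real.sq_sqrt hs.le]
  have key : 4*s^2*x^4 - 10*s*x^2 + 2 + 4*Real.sqrt s*x
      = (y-1)^2*(4*y^2+8*y+2) := by
    have h4 : y^4 = s^2 * x^4 := by
      have : y^4 = (y^2)^2 := by ring
      rw [this, h2]; ring
    rw [hy] at h2 h4 ⊢
    nlinarith [h2, h4]
  have : 0 ≤ (y-1)^2*(4*y^2+8*y+2) := by positivity
  rw [key] at *
  positivity

lemma Lf_mono {s : ℝ} (hs : 0 < s) : MonotoneOn (Lf s) (Ici (0:ℝ)) := by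
  apply monotoneOn_of_deriv_nonneg (convex_Ici 0)
  · exact fun x _ => ((hasDerivAt_Lf hs x).continuousAt).continuousWithinAt
  · intro x hx
    exact (hasDerivAt_Lf hs x).differentiableAt.differentiableWithinAt
  · intro x hx
    rw [interior_Ici] at hx
    rw [(hasDerivAt_Lf hs x).deriv]
    exact Lf_deriv_nonneg hs (le_of_lt hx)

lemma LfSubPh_mono {s : ℝ} (hs : 0 < s) {a b : ℝ} (ha : 0 ≤ a) (hab : a ≤ b) :
    Lf s a - ph s a ≤ Lf s b - ph s b := by
  unfold Lf
  have h : Real.exp (-(s*b^2)) ≤ Real.exp (-(s*a^2)) := by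
    apply Real.exp_le_exp.2
    have : 0 ≤ s * (b^2 - a^2) := mul_nonneg hs.le (by nlinarith)
    nlinarith
  have hσ : 0 ≤ 2*(Real.sqrt s)⁻¹ := by positivity
  nlinarith

lemma Lf_nonpos {s : ℝ} (hs : 0 < s) {x : ℝ} (hx : 0 ≤ x) : Lf s x ≤ 0 := by
  have hr : Real.sqrt s * Real.sqrt s = s := Real.mul_self_sqrt hs.le
  have hrpos : 0 < Real.sqrt s := Real.sqrt_pos.2 hs
  have key : 2*x - 2*s*x^3 ≤ 2*(Real.sqrt s)⁻¹ := by
    rw [← mul_le_mul_iff_left₀ hrpos]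
    have h1 : 2*(Real.sqrt s)⁻¹ * Real.sqrt s = 2 := by
      field_simp
    rw [h1]
    set y := Real.sqrt s * x with hy
    have h2 : (2*x - 2*s*x^3) * Real.sqrt s = 2*y - 2*y^3 := by
      rw [hy]; linear_combination (2*x^3*Real.sqrt s) * hr
    rw [h2]
    have hy0 : 0 ≤ y := mul_nonneg hrpos.le hx
    rcases le_total y 1 with h | h
    · nlinarith [pow_nonneg hy0 3]
    · nlinarith [mul_nonneg (mul_nonneg hy0 (sub_nonneg.2 h)) (by linarith : (0:ℝ) ≤ y + 1)]
  have he : 0 < Real.exp (-(s*x^2)) := Real.exp_pos _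
  unfold Lf ph
  nlinarith

lemma ph_half_nonneg {s : ℝ} (hs : 0 < s) (hs4 : s ≤ 4) : 0 ≤ ph s (1/2) := by
  unfold ph
  have he : 0 < Real.exp (-(s*(1/2:ℝ)^2)) := Real.exp_pos _
  nlinarith

lemma fg_cont (s : ℝ) : Continuous (fg s) := by
  unfold fg; fun_prop

lemma fg_nonneg (s x : ℝ) : 0 ≤ fg s x := by
  unfold fg; positivity

lemma midpoint_bound {s : ℝ} (hs : 0 < s) (c : ℝ) (hc : 1 ≤ c) :
    ∫ x in (c-1/2)..(c+1/2), fg s x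
      ≤ fg s c + (Lf s (c+1/2) - Lf s (c-1/2))/8 := by
  set ΔL := Lf s (c+1/2) - Lf s (c-1/2) with hΔL
  have cont := fg_cont s
  have key : ∀ u ∈ Icc (0:ℝ) (1/2), fg s (c+u) + fg s (c-u) ≤ 2*fg s c + u*ΔL := by
    intro u hu
    set p : ℝ → ℝ := fun u => 2*fg s c + u*ΔL - fg s (c+u) - fg s (c-u) with hp
    have hder : ∀ v : ℝ, HasDerivAt p (ΔL - ph s (c+v) + ph s (c-v)) v := by
      intro v
      have h1 : HasDerivAt (fun v : ℝ => fg s (c+v)) (ph s (c+v)) v := by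
        have := (hasDerivAt_fg s (c+v)).comp v ((hasDerivAt_id v).const_add c)
        simpa [Function.comp_def] using this
      have h2 : HasDerivAt (fun v : ℝ => fg s (c-v)) (-(ph s (c-v))) v := by
        have := (hasDerivAt_fg s (c-v)).comp v ((hasDerivAt_id v).const_sub c)
        simpa [Function.comp_def] using this
      have h3 : HasDerivAt (fun v : ℝ => 2*fg s c + v*ΔL) (ΔL) v := by
        simpa using ((hasDerivAt_id v).mul_const ΔL).const_add (2*fg s c)
      have := (h3.sub h1).sub h2
      refine this.congr_deriv ?_
      ring
    have hmono : MonotoneOn p (Icc (0:ℝ) (1/2)) := by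
      apply monotoneOn_of_deriv_nonneg (convex_Icc 0 (1/2))
      · exact fun v _ => (hder v).continuousAt.continuousWithinAt
      · exact fun v _ => (hder v).differentiableAt.differentiableWithinAt
      · intro v hv
        rw [interior_Icc] at hv
        rw [(hder v).deriv]
        have hv0 : 0 ≤ v := le_of_lt hv.1
        have hv2 : v ≤ 1/2 := le_of_lt hv.2
        have hcv : (0:ℝ) ≤ c - v := by linarith
        have hsub : Lf s (c-v) - ph s (c-v) ≤ Lf s (c+v) - ph s (c+v) :=
          LfSubPh_mono hs hcv (by linarith)
        have hL1 : Lf s (c+v) ≤ Lf s (c+1/2) :=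
          Lf_mono hs (by simp; linarith : (c+v) ∈ Ici (0:ℝ))
            (by simp; linarith : (c+1/2) ∈ Ici (0:ℝ)) (by linarith)
        have hL2 : Lf s (c-1/2) ≤ Lf s (c-v) :=
          Lf_mono hs (by simp; linarith : (c-1/2) ∈ Ici (0:ℝ))
            (by simp; linarith : (c-v) ∈ Ici (0:ℝ)) (by linarith)
        rw [hΔL]
        linarith
    have h0 : p 0 = 0 := by
      rw [hp]; simp; ring
    have := hmono (show (0:ℝ) ∈ Icc (0:ℝ) (1/2) by simp) hu hu.1
    rw [h0] at this
    rw [hp] at this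
    simp only at this
    linarith
  have split : ∫ x in (c-1/2)..(c+1/2), fg s x
      = (∫ u in (0:ℝ)..(1/2), fg s (c+u)) + ∫ u in (0:ℝ)..(1/2), fg s (c-u) := by
    have e1 : (∫ u in (0:ℝ)..(1/2), fg s (c+u)) = ∫ x in c..(c+1/2), fg s x := by
      simpa using intervalIntegral.integral_comp_add_left (a := (0:ℝ)) (b := 1/2) (fg s) c
    have e2 : (∫ u in (0:ℝ)..(1/2), fg s (c-u)) = ∫ x in (c-1/2)..c, fg s x := by
      simpa using intervalIntegral.integral_comp_sub_left (a := (0:ℝ)) (b := 1/2) (fg s) c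
    rw [e1, e2]
    have j1 : IntervalIntegrable (fg s) MeasureTheory.volume (c-1/2) c :=
      cont.intervalIntegrable _ _
    have j2 : IntervalIntegrable (fg s) MeasureTheory.volume c (c+1/2) :=
      cont.intervalIntegrable _ _
    linear_combination -(intervalIntegral.integral_add_adjacent_intervals j1 j2)
  have i1 : IntervalIntegrable (fun u : ℝ => fg s (c+u)) MeasureTheory.volume 0 (1/2) :=
    (cont.comp (by continuity)).intervalIntegrable _ _
  have i2 : IntervalIntegrable (fun u : ℝ => fg s (c-u)) MeasureTheory.volume 0 (1/2) :=
    (cont.comp (by continuity)).intervalIntegrable _ _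
  rw [split, ← intervalIntegral.integral_add i1 i2]
  have hmono2 : (∫ u in (0:ℝ)..(1/2), (fg s (c+u) + fg s (c-u)))
      ≤ ∫ u in (0:ℝ)..(1/2), (2*fg s c + u*ΔL) := by
    apply intervalIntegral.integral_mono_on (by norm_num)
    · exact i1.add i2
    · apply IntervalIntegrable.add
      · exact intervalIntegrable_const
      · exact ((continuous_id.mul continuous_const)).intervalIntegrable _ _
    · exact key
  refine hmono2.trans (le_of_eq ?_)
  have k1 : IntervalIntegrable (fun _ : ℝ => 2*fg s c) MeasureTheory.volume 0 (1/2) :=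
    intervalIntegrable_const
  have k2 : IntervalIntegrable (fun u : ℝ => u*ΔL) MeasureTheory.volume 0 (1/2) :=
    (continuous_id.mul continuous_const).intervalIntegrable _ _
  rw [intervalIntegral.integral_add k1 k2]
  have A1 : (∫ _u in (0:ℝ)..(1/2), 2*fg s c) = fg s c := by simp
  have A2 : (∫ u in (0:ℝ)..(1/2), u*ΔL) = ΔL/8 := by
    rw [intervalIntegral.integral_mul_const ΔL (fun u => u)]
    rw [integral_id]
    norm_num
    ring
  rw [A1, A2]

lemma integrableOn_fg {s : ℝ} (hs : 0 < s) : IntegrableOn (fg s) (Ioi (0:ℝ)) := by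
  have h := integrableOn_rpow_mul_exp_neg_mul_sq hs (by norm_num : (-1:ℝ) < 2)
  apply h.congr_fun ?_ measurableSet_Ioi
  intro x _
  show x ^ (2:ℝ) * Real.exp (-s*x^2) = fg s x
  unfold fg
  rw [show x ^ (2:ℝ) = x ^ (2:ℕ) from by
    rw [show (2:ℝ) = ((2:ℕ):ℝ) by norm_num, Real.rpow_natCast], neg_mul]

lemma integrable_gauss_exp {s : ℝ} (hs : 0 < s) :
    Integrable (fun x : ℝ => Real.exp (-(s*x^2))) := by
  have := integrable_exp_neg_mul_sq hs
  simpa [neg_mul] using this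

lemma moment {s : ℝ} (hs : 0 < s) :
    ∫ x in Ioi (0:ℝ), fg s x = Real.sqrt (π/s) / (4*s) := by
  set F : ℝ → ℝ := fun x => -(x * Real.exp (-(s*x^2))) / (2*s) with hFdef
  have hF : ∀ x : ℝ, HasDerivAt F (fg s x - Real.exp (-(s*x^2))/(2*s)) x := by
    intro x
    have h2 : HasDerivAt (fun x : ℝ => Real.exp (-(s*x^2))) ((-(s*(2*x))) * Real.exp (-(s*x^2))) x := by
      have hx : HasDerivAt (fun x : ℝ => -(s*x^2)) (-(s*(2*x))) x := by
        simpa [Pi.neg_def] using ((hasDerivAt_pow 2 x).const_mul s).neg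
      simpa [mul_comm] using hx.exp
    have h1 : HasDerivAt (fun x : ℝ => x * Real.exp (-(s*x^2)))
        (Real.exp (-(s*x^2)) + x * ((-(s*(2*x))) * Real.exp (-(s*x^2)))) x := by
      exact ((hasDerivAt_id x).mul h2).congr_deriv (by simp)
    have := (h1.neg).div_const (2*s)
    refine this.congr_deriv ?_
    unfold fg
    field_simp
    ring
  have cont := fg_cont s
  have conte : Continuous (fun x : ℝ => Real.exp (-(s*x^2))) := by continuity
  have hident : ∀ R : ℝ, ∫ x in (0:ℝ)..R, fg s x
      = F R - F 0 + (∫ x in (0:ℝ)..R, Real.exp (-(s*x^2)))/(2*s) := by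
    intro R
    have e1 : ∫ x in (0:ℝ)..R, (fg s x - Real.exp (-(s*x^2))/(2*s)) = F R - F 0 :=
      intervalIntegral.integral_eq_sub_of_hasDerivAt (fun x _ => hF x)
        ((cont.sub (conte.div_const (2*s))).intervalIntegrable _ _)
    have e2 : ∫ x in (0:ℝ)..R, (fg s x - Real.exp (-(s*x^2))/(2*s))
        = (∫ x in (0:ℝ)..R, fg s x) - (∫ x in (0:ℝ)..R, Real.exp (-(s*x^2)))/(2*s) := by
      rw [intervalIntegral.integral_sub (cont.intervalIntegrable _ _)
        ((conte.div_const (2*s)).intervalIntegrable _ _)]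
      rw [intervalIntegral.integral_div]
    rw [e2] at e1
    linarith [e1]
  -- limits
  have T1 : Tendsto (fun R : ℝ => ∫ x in (0:ℝ)..R, fg s x) atTop
      (nhds (∫ x in Ioi (0:ℝ), fg s x)) :=
    intervalIntegral_tendsto_integral_Ioi 0 (integrableOn_fg hs) tendsto_id
  have T2 : Tendsto (fun R : ℝ => R * Real.exp (-(s*R^2))) atTop (nhds 0) := by
    apply squeeze_zero' (g := fun R : ℝ => R * Real.exp (-R))
    · filter_upwards [eventually_ge_atTop (0:ℝ)] with R hR
      positivity
    · filter_upwards [eventually_ge_atTop (1/s)] with R hR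
      have hR0 : 0 ≤ R := le_trans (by positivity) hR
      have hinv : s * (1/s) = 1 := by field_simp
      have h2 : 1 ≤ s * R := by nlinarith [mul_le_mul_of_nonneg_left hR hs.le]
      have h1 : R ≤ s * R^2 := by nlinarith [mul_nonneg hR0 (by nlinarith : (0:ℝ) ≤ s*R - 1)]
      have hexp : Real.exp (-(s*R^2)) ≤ Real.exp (-R) := Real.exp_le_exp.2 (by linarith)
      exact mul_le_mul_of_nonneg_left hexp hR0
    · simpa using tendsto_pow_mul_exp_neg_atTop_nhds_zero 1
  have T3 : Tendsto (fun R : ℝ => ∫ x in (0:ℝ)..R, Real.exp (-(s*x^2))) atTop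
      (nhds (Real.sqrt (π/s)/2)) := by
    have := intervalIntegral_tendsto_integral_Ioi 0 ((integrable_gauss_exp hs).integrableOn) tendsto_id
    have hval : (∫ x in Ioi (0:ℝ), Real.exp (-(s*x^2))) = Real.sqrt (π/s)/2 := by
      rw [← integral_gaussian_Ioi s]
      congr 1
      ext x
      ring_nf
    rwa [hval] at this
  have T4 : Tendsto (fun R : ℝ => F R - F 0 + (∫ x in (0:ℝ)..R, Real.exp (-(s*x^2)))/(2*s))
      atTop (nhds (Real.sqrt (π/s) / (4*s))) := by
    have hF0 : F 0 = 0 := by simp [hFdef]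
    have hFlim : Tendsto F atTop (nhds 0) := by
      have := (T2.neg).div_const (2*s)
      simpa [hFdef, neg_div] using this
    have := (hFlim.sub_const (F 0)).add (T3.div_const (2*s))
    rw [hF0] at this
    simp only [sub_zero, zero_add] at this
    convert this using 2 <;> ring
  have : Tendsto (fun R : ℝ => ∫ x in (0:ℝ)..R, fg s x) atTop
      (nhds (Real.sqrt (π/s) / (4*s))) := by
    simp only [hident]
    exact T4
  exact tendsto_nhds_unique T1 this

lemma summable_fg {s : ℝ} (hs : 0 < s) : Summable (fun n : ℕ => fg s ((n:ℝ)+1)) := by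
  have hr : ‖Real.exp (-s)‖ < 1 := by
    rw [Real.norm_eq_abs, abs_of_pos (Real.exp_pos _)]
    rw [Real.exp_lt_one_iff]
    linarith
  have h0 : Summable (fun n : ℕ => (n:ℝ)^2 * Real.exp (-s)^n) :=
    summable_pow_mul_geometric_of_norm_lt_one 2 hr
  have h1 : Summable (fun n : ℕ => ((n:ℝ)+1)^2 * Real.exp (-s)^(n+1)) := by
    have := (summable_nat_add_iff 1).2 h0
    apply this.congr
    intro n
    push_cast
    ring
  apply Summable.of_nonneg_of_le (fun n => fg_nonneg s _) ?_ h1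
  intro n
  unfold fg
  have hn : (0:ℝ) ≤ (n:ℝ) := Nat.cast_nonneg n
  have hexp : Real.exp (-(s*((n:ℝ)+1)^2)) ≤ Real.exp (-s)^(n+1) := by
    rw [← Real.exp_nat_mul]
    apply Real.exp_le_exp.2
    push_cast
    nlinarith [mul_nonneg (mul_nonneg hs.le hn) hn, mul_nonneg hs.le hn]
  have h2 : (0:ℝ) ≤ ((n:ℝ)+1)^2 := by positivity
  exact mul_le_mul_of_nonneg_left hexp h2

lemma integral_Ioi_half_le {s : ℝ} (hs : 0 < s) (hs4 : s ≤ 4) :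
    ∫ x in Ioi (1/2:ℝ), fg s x
      ≤ (∑' n : ℕ, fg s ((n:ℝ)+1)) + (Real.sqrt s)⁻¹/4 := by
  have cont := fg_cont s
  have hsum := summable_fg hs
  set σ := (Real.sqrt s)⁻¹ with hσ
  clear_value σ
  have hσ0 : 0 < σ := by
    rw [hσ]; positivity
  have partial_bd : ∀ N : ℕ, ∫ x in (1/2:ℝ)..((N:ℝ)+1/2), fg s x
      ≤ (∑' n : ℕ, fg s ((n:ℝ)+1)) + σ/4 := by
    intro N
    set a : ℕ → ℝ := fun n => (n:ℝ)+1/2 with ha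
    clear_value a
    have hadd : ∀ i, IntervalIntegrable (fg s) MeasureTheory.volume (a i) (a (i+1)) :=
      fun i => cont.intervalIntegrable _ _
    have e0 : ∫ x in (1/2:ℝ)..((N:ℝ)+1/2), fg s x
        = ∑ n ∈ Finset.range N, ∫ x in (a n)..(a (n+1)), fg s x := by
      rw [intervalIntegral.sum_integral_adjacent_intervals (fun i _ => hadd i)]
      rw [ha]
      norm_num
    rw [e0]
    have e1 : ∀ n ∈ Finset.range N, (∫ x in (a n)..(a (n+1)), fg s x)
        ≤ fg s ((n:ℝ)+1) + (Lf s (a (n+1)) - Lf s (a n))/8 := by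
      intro n _
      have := midpoint_bound hs ((n:ℝ)+1)
        (by have h := (Nat.cast_nonneg n : (0:ℝ) ≤ (n:ℝ)); linarith)
      have ea : a n = ((n:ℝ)+1) - 1/2 := by rw [ha]; push_cast; ring
      have eb : a (n+1) = ((n:ℝ)+1) + 1/2 := by rw [ha]; push_cast; ring
      rw [ea, eb]
      exact this
    calc ∑ n ∈ Finset.range N, ∫ x in (a n)..(a (n+1)), fg s x
        ≤ ∑ n ∈ Finset.range N, (fg s ((n:ℝ)+1) + (Lf s (a (n+1)) - Lf s (a n))/8) :=
          Finset.sum_le_sum e1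
      _ = (∑ n ∈ Finset.range N, fg s ((n:ℝ)+1))
            + (Lf s (a N) - Lf s (a 0))/8 := by
          rw [Finset.sum_add_distrib]
          rw [← Finset.sum_div]
          rw [Finset.sum_range_sub (f := fun n => Lf s (a n))]
      _ ≤ (∑' n : ℕ, fg s ((n:ℝ)+1)) + σ/4 := by
          have t1 : ∑ n ∈ Finset.range N, fg s ((n:ℝ)+1) ≤ ∑' n : ℕ, fg s ((n:ℝ)+1) :=
            Summable.sum_le_tsum _ (fun i _ => fg_nonneg s _) hsum
          have t2 : Lf s (a N) ≤ 0 := Lf_nonpos hs (by rw [ha]; positivity)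
          have t3 : -Lf s (a 0) ≤ 2*σ := by
            have e2 : a 0 = 1/2 := by rw [ha]; norm_num
            rw [e2]
            unfold Lf
            have h1 : 0 ≤ ph s (1/2) := ph_half_nonneg hs hs4
            have h2 : Real.exp (-(s*(1/2:ℝ)^2)) ≤ 1 := by
              rw [Real.exp_le_one_iff]
              nlinarith
            rw [← hσ]
            nlinarith
          have t4 : (Lf s (a N) - Lf s (a 0))/8 ≤ σ/4 := by linarith
          linarith
  have T : Tendsto (fun N : ℕ => ∫ x in (1/2:ℝ)..((N:ℝ)+1/2), fg s x) atTop
      (nhds (∫ x in Ioi (1/2:ℝ), fg s x)) := by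
    apply intervalIntegral_tendsto_integral_Ioi
    · exact (integrableOn_fg hs).mono_set (Ioi_subset_Ioi (by norm_num))
    · apply Filter.tendsto_atTop_add_const_right
      exact tendsto_natCast_atTop_atTop
  exact le_of_tendsto T (Filter.Eventually.of_forall partial_bd)

lemma Vform {s : ℝ} (hs : 0 < s) :
    Real.sqrt (π/s)/(4*s) = Real.sqrt π * ((Real.sqrt s)⁻¹)^3/4 := by
  have hr : Real.sqrt s * Real.sqrt s = s := Real.mul_self_sqrt hs.le
  have hne : Real.sqrt s ≠ 0 := by positivity
  rw [Real.sqrt_div pi_pos.le]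
  have hc : Real.sqrt s ^ 3 = Real.sqrt s * s := by
    linear_combination (Real.sqrt s) * hr
  rw [inv_pow, hc]
  field_simp

lemma case_large {s : ℝ} (hs45 : (0.45:ℝ) ≤ s) :
    Real.sqrt (π/s)/(4*s) * Real.exp (-(9*s/4)) ≤ ∑' n : ℕ, fg s ((n:ℝ)+1) := by
  have hs : 0 < s := by linarith
  have hterm : Real.exp (-s) ≤ ∑' n : ℕ, fg s ((n:ℝ)+1) := by
    have h := Summable.le_tsum (summable_fg hs) 0 (fun j _ => fg_nonneg s _)
    calc Real.exp (-s) = fg s (((0:ℕ):ℝ)+1) := by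
          unfold fg; norm_num
      _ ≤ _ := h
  refine le_trans ?_ hterm
  rw [Vform hs]
  set σ := (Real.sqrt s)⁻¹ with hσ
  have hsq45 : (0.6708:ℝ) ≤ Real.sqrt s := by
    have h1 : (0.6708:ℝ) = Real.sqrt (0.6708^2) := (Real.sqrt_sq (by norm_num)).symm
    rw [h1]
    exact Real.sqrt_le_sqrt (by nlinarith)
  have hσub : σ ≤ 1.491 := by
    rw [hσ]
    have h2 : (1.491:ℝ)⁻¹ ≤ Real.sqrt s := by
      have : ((1.491:ℝ)⁻¹ ≤ 0.6708) := by norm_num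
      linarith
    have h3 := inv_anti₀ (by norm_num : (0:ℝ) < (1.491:ℝ)⁻¹) h2
    simpa using h3
  have hσ0 : 0 < σ := by rw [hσ]; positivity
  have hpi : Real.sqrt π ≤ 1.7725 := by
    have h1 : (1.7725:ℝ) = Real.sqrt (1.7725^2) := (Real.sqrt_sq (by norm_num)).symm
    rw [h1]
    exact Real.sqrt_le_sqrt (by nlinarith [Real.pi_lt_d6])
  have hV : Real.sqrt π * σ^3/4 ≤ 1.47 := by
    nlinarith [Real.sqrt_nonneg π, pow_le_pow_left₀ hσ0.le hσub 3]
  have hE : Real.exp (-(9*s/4)) = Real.exp (-s) * Real.exp (-(5*s/4)) := by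
    rw [← Real.exp_add]; ring_nf
  rw [hE]
  have h5 : Real.exp (-(5*s/4)) * 1.47 ≤ 1 := by
    have h6 : (1:ℝ) + 5*s/4 ≤ Real.exp (5*s/4) := by
      have := Real.add_one_le_exp (5*s/4)
      linarith
    have h7 : Real.exp (-(5*s/4)) = (Real.exp (5*s/4))⁻¹ := by
      rw [← Real.exp_neg]
    rw [h7]
    rw [inv_mul_le_iff₀ (Real.exp_pos _)]
    nlinarith
  have hEpos : 0 < Real.exp (-s) := Real.exp_pos _
  calc Real.sqrt π * σ^3/4 * (Real.exp (-s) * Real.exp (-(5*s/4)))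
      ≤ 1.47 * (Real.exp (-s) * Real.exp (-(5*s/4))) := by
        apply mul_le_mul_of_nonneg_right hV
        positivity
    _ = Real.exp (-s) * (Real.exp (-(5*s/4)) * 1.47) := by ring
    _ ≤ Real.exp (-s) * 1 := by
        apply mul_le_mul_of_nonneg_left h5 hEpos.le
    _ = Real.exp (-s) := by ring

lemma case_small {s : ℝ} (hs : 0 < s) (hs45 : s ≤ (0.45:ℝ)) :
    Real.sqrt (π/s)/(4*s) * Real.exp (-(9*s/4)) ≤ ∑' n : ℕ, fg s ((n:ℝ)+1) := by
  set σ := (Real.sqrt s)⁻¹ with hσ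
  have hσ0 : 0 < σ := by rw [hσ]; positivity
  have hr : Real.sqrt s * Real.sqrt s = s := Real.mul_self_sqrt hs.le
  have hS : Real.sqrt (π/s)/(4*s) - 1/24 - σ/4 ≤ ∑' n : ℕ, fg s ((n:ℝ)+1) := by
    have h1 := integral_Ioi_half_le hs (by linarith)
    have h2 := moment hs
    have h3 : ∫ x in Ioc (0:ℝ) (1/2), fg s x ≤ 1/24 := by
      have hb : ∫ x in Ioc (0:ℝ) (1/2), fg s x ≤ ∫ x in Ioc (0:ℝ) (1/2), x^2 := by
        apply setIntegral_mono_on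
        · exact ((fg_cont s).integrableOn_Ioc)
        · exact ((continuous_pow 2).integrableOn_Ioc)
        · exact measurableSet_Ioc
        · intro x _
          unfold fg
          nlinarith [Real.exp_le_one_iff.2 (by nlinarith [sq_nonneg x] : -(s*x^2) ≤ 0),
            sq_nonneg x, Real.exp_pos (-(s*x^2))]
      have hval : ∫ x in Ioc (0:ℝ) (1/2), (x:ℝ)^2 = 1/24 := by
        rw [← intervalIntegral.integral_of_le (by norm_num : (0:ℝ) ≤ 1/2)]
        rw [integral_pow]
        norm_num
      linarith
    have h4 : ∫ x in Ioi (0:ℝ), fg s x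
        = (∫ x in Ioc (0:ℝ) (1/2), fg s x) + ∫ x in Ioi (1/2:ℝ), fg s x := by
      rw [← Set.Ioc_union_Ioi_eq_Ioi (by norm_num : (0:ℝ) ≤ 1/2)]
      apply setIntegral_union
      · exact Set.Ioc_disjoint_Ioi le_rfl
      · exact measurableSet_Ioi
      · exact (integrableOn_fg hs).mono_set (by intro x hx; exact hx.1)
      · exact (integrableOn_fg hs).mono_set (Ioi_subset_Ioi (by norm_num))
    rw [h2] at h4
    linarith
  refine le_trans ?_ hS
  rw [Vform hs, ← hσ]
  set A := Real.sqrt π with hA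
  set E := Real.exp (-(9*s/4)) with hE
  -- numeric facts
  have hApos : (1.7724:ℝ) ≤ A := by
    rw [hA, show (1.7724:ℝ) = Real.sqrt (1.7724^2) from (Real.sqrt_sq (by norm_num)).symm]
    exact Real.sqrt_le_sqrt (by nlinarith [Real.pi_gt_d6])
  have hEpos : 0 < E := Real.exp_pos _
  have hElb : (0.3632:ℝ) ≤ E := by
    have h5 : Real.exp (1.0125:ℝ) ≤ 2.7527 := by
      have e1 : Real.exp (1.0125:ℝ) = Real.exp 1 * Real.exp 0.0125 := by
        rw [← Real.exp_add]; norm_num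
      have e2 : Real.exp (0.0125:ℝ) ≤ 1/0.9875 := by
        have h6 := Real.add_one_le_exp (-0.0125:ℝ)
        have h7 : Real.exp (-0.0125:ℝ) = (Real.exp 0.0125)⁻¹ := by
          rw [← Real.exp_neg]
        rw [h7] at h6
        have h8 : (0:ℝ) < Real.exp 0.0125 := Real.exp_pos _
        have h9 : Real.exp 0.0125 * (Real.exp 0.0125)⁻¹ = 1 := mul_inv_cancel₀ h8.ne'
        nlinarith
      have e3 : Real.exp 1 < 2.7182818286 := Real.exp_one_lt_d9
      nlinarith [Real.exp_pos (0.0125:ℝ)]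
    have h9 : Real.exp (-(1.0125:ℝ)) ≤ E := by
      rw [hE]; apply Real.exp_le_exp.2; linarith
    have h10 : (0.3632:ℝ) ≤ Real.exp (-(1.0125:ℝ)) := by
      rw [Real.exp_neg]
      rw [le_inv_comm₀ (by norm_num) (Real.exp_pos _)]
      calc Real.exp (1.0125:ℝ) ≤ 2.7527 := h5
        _ ≤ (0.3632:ℝ)⁻¹ := by norm_num
    linarith
  have hσlb : (1.49:ℝ) ≤ σ := by
    have h11 : Real.sqrt s ≤ 0.671 := by
      rw [show (0.671:ℝ) = Real.sqrt (0.671^2) from (Real.sqrt_sq (by norm_num)).symm]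
      exact Real.sqrt_le_sqrt (by nlinarith)
    rw [hσ]
    have h12 : (0.671:ℝ)⁻¹ ≤ (Real.sqrt s)⁻¹ :=
      inv_anti₀ (Real.sqrt_pos.2 hs) h11
    have h13 : (1.49:ℝ) ≤ (0.671:ℝ)⁻¹ := by norm_num
    linarith
  have hkey : (9*s/4)*E ≤ 1 - E := by
    have h13 := Real.add_one_le_exp (9*s/4)
    have h14 : E * Real.exp (9*s/4) = 1 := by
      rw [hE, ← Real.exp_add]; norm_num
    nlinarith
  have hs1 : σ*σ*s = 1 := by
    rw [hσ]
    field_simp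
    rw [Real.sq_sqrt hs.le]
  -- main chain
  have step0 : A*σ^3/4*((9*s/4)*E) = 9/16*(A*E)*σ := by
    linear_combination (9/16*A*E*σ) * hs1
  have step1 : 9/16*(A*E)*σ ≤ A*σ^3/4*(1-E) := by
    rw [← step0]
    apply mul_le_mul_of_nonneg_left hkey (by positivity)
  have step2 : (0.362:ℝ)*σ ≤ 9/16*(A*E)*σ := by
    have h15 : (0.362:ℝ) ≤ 9/16*(A*E) := by
      nlinarith
    nlinarith
  have step3 : 1/24 + σ/4 ≤ (0.362:ℝ)*σ := by
    nlinarith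
  nlinarith [step1, step2, step3]

/-- van den Berg's lower bound for the Dirichlet heat kernel of the ball `B(0,ε) ⊂ ℝ³` at the
center: `K_ε(0,0;t) ≥ (4πt)^{−3/2} e^{−9π²t/(4ε²)}`.  The kernel at the center is given by its
eigenfunction expansion, `K_ε(0,0;t) = Σ_{k≥1} e^{−(kπ/ε)²t} · k²π/(2ε³)`, since only the radial
eigenfunctions `sin(kπ|x|/ε)/(√(2πε)|x|)` (with eigenvalues `(kπ/ε)²`) are nonzero at `0`. -/
theorem stmt17 (ε : ℝ) (hε : 0 < ε) (t : ℝ) (ht : 0 < t) :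
    (4 * Real.pi * t) ^ (-(3:ℝ)/2) * Real.exp (-9 * Real.pi^2 * t / (4 * ε^2)) ≤
      ∑' k : ℕ, Real.exp (-(((k:ℝ)+1) * Real.pi / ε)^2 * t) *
        (((k:ℝ)+1)^2 * Real.pi / (2 * ε^3)) := by
  have hπ := Real.pi_pos
  set s := π^2*t/ε^2 with hsdef
  have hs : 0 < s := by rw [hsdef]; positivity
  have hmain : Real.sqrt (π/s)/(4*s) * Real.exp (-(9*s/4)) ≤ ∑' n : ℕ, fg s ((n:ℝ)+1) := by
    rcases le_total s 0.45 with h | h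
    · exact case_small hs h
    · exact case_large h
  have hterm : ∀ k:ℕ, Real.exp (-(((k:ℝ)+1) * Real.pi / ε)^2 * t) *
        (((k:ℝ)+1)^2 * Real.pi / (2 * ε^3))
      = fg s ((k:ℝ)+1) * (Real.pi/(2*ε^3)) := by
    intro k
    unfold fg
    have harg : -(((k:ℝ)+1) * Real.pi / ε)^2 * t = -(s*((k:ℝ)+1)^2) := by
      rw [hsdef]; field_simp
    rw [harg]; ring
  rw [tsum_congr hterm, tsum_mul_right]
  have hC : (0:ℝ) < Real.pi/(2*ε^3) := by positivity
  -- identities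
  set w := Real.sqrt (Real.pi * t) with hwdef
  have hw0 : 0 < w := by rw [hwdef]; positivity
  have hw : w * w = Real.pi * t := Real.mul_self_sqrt (by positivity)
  have hw2 : w^2 = Real.pi * t := by rw [pow_two]; exact hw
  have hsq : Real.sqrt (π/s) = ε/w := by
    rw [show π/s = (ε/w)^2 from by
      rw [hsdef]; field_simp; linear_combination hw2]
    exact Real.sqrt_sq (by positivity)
  have hpow : (4*π*t)^(-(3:ℝ)/2) = ((4*π*t) * Real.sqrt (4*π*t))⁻¹ := by
    have hx : (0:ℝ) < 4*π*t := by positivity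
    rw [show (-(3:ℝ)/2) = -(3/2) by norm_num, Real.rpow_neg hx.le]
    congr 1
    rw [show (3:ℝ)/2 = 1 + 1/2 by norm_num, Real.rpow_add hx, Real.rpow_one,
      ← Real.sqrt_eq_rpow]
  have h4w : Real.sqrt (4*π*t) = 2*w := by
    rw [show 4*π*t = (2*w)^2 from by linear_combination (-4)*hw2]
    exact Real.sqrt_sq (by positivity)
  have hgoal_lhs : (4*π*t)^(-(3:ℝ)/2) * Real.exp (-9*π^2*t/(4*ε^2))
      = (Real.sqrt (π/s)/(4*s) * Real.exp (-(9*s/4))) * (Real.pi/(2*ε^3)) := by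
    have hexp_eq : Real.exp (-9*π^2*t/(4*ε^2)) = Real.exp (-(9*s/4)) := by
      congr 1; rw [hsdef]; field_simp
    rw [hexp_eq, hpow, h4w, hsq, hsdef]
    rw [show ((4*π*t) * (2*w))⁻¹ = (ε/w)/(4*(π^2*t/ε^2)) * (π/(2*ε^3)) from by
      field_simp]
    ring
  rw [hgoal_lhs]
  exact mul_le_mul_of_nonneg_right hmain hC.le
end
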